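/- arXiv:0903.4237 — 3 statements merged into one kernel-verified Lean document; each statement's English description precedes it below -/
import Mathlib

section
/- Let k ≥ 2 and let a, b, c be nonnegative integers. Let S be the multiset consisting of 2^k − 3 copies of a and one copy each of b and c. Then S is realized by some F_2-linear map between binary linear codes if and only if a, b, c ≡ 0 (mod 2^{k−2}) and either exactly 1 or exactly 3 of a, b, c are congruent to 0 (mod 2^{k−1}). -/
open Matrix

noncomputable section

instance instFiniteProjectivization (K V : Type*) [DivisionRing K] [AddCommGroup V] [Module K V]
    [Finite V] : Finite (Projectivization K V) :=
  Quotient.finite _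

noncomputable instance instFintypeProjectivization (K V : Type*) [DivisionRing K] [AddCommGroup V]
    [Module K V] [Finite V] : Fintype (Projectivization K V) :=
  Fintype.ofFinite _

noncomputable instance instDecEqProjectivization (K V : Type*) [DivisionRing K] [AddCommGroup V]
    [Module K V] : DecidableEq (Projectivization K V) :=
  Classical.decEq _

/-- The projective multiset of weight changes of a linear map between linear codes
`U ⊆ F^n` and `V ⊆ F^m`: the multiset `{w(u) - w(φ(u)) : u ∈ P(U)}`. -/
def projWeightChanges {F : Type} [Field F] [Fintype F] [DecidableEq F] {n m : ℕ}
    {U : Submodule F (Fin n → F)} {V : Submodule F (Fin m → F)} (φ : U →ₗ[F] V) : Multiset ℤ :=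
  (Finset.univ : Finset (Projectivization F U)).val.map
    fun p => (hammingNorm (p.rep : Fin n → F) : ℤ) - (hammingNorm ((φ p.rep : V) : Fin m → F) : ℤ)

/-- S is realized by some F-linear map between linear codes. -/
def Realizes (F : Type) [Field F] [Fintype F] [DecidableEq F] (S : Multiset ℤ) : Prop :=
  ∃ (n m : ℕ) (U : Submodule F (Fin n → F)) (V : Submodule F (Fin m → F)) (φ : U →ₗ[F] V),
    projWeightChanges φ = S

/-- A coordinate projection up to monomial equivalence: multiplication by a matrix
with at most one nonzero entry in each row and each column. -/
def IsProjection {F : Type} [Field F] [Fintype F] [DecidableEq F] {n m : ℕ}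
    {U : Submodule F (Fin n → F)} {V : Submodule F (Fin m → F)} (φ : U →ₗ[F] V) : Prop :=
  ∃ M : Matrix (Fin m) (Fin n) F,
    (∀ u : U, ((φ u : Fin m → F)) = M.mulVec (u : Fin n → F)) ∧
    (∀ i j j', M i j ≠ 0 → M i j' ≠ 0 → j = j') ∧
    (∀ i i' j, M i j ≠ 0 → M i' j ≠ 0 → i = i')

/-- A monomial equivalence: multiplication by an n × n matrix with exactly one
nonzero entry in each row and each column. -/
def IsMonomialEquiv {F : Type} [Field F] [Fintype F] [DecidableEq F] {n : ℕ}
    {U V : Submodule F (Fin n → F)} (φ : U →ₗ[F] V) : Prop :=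
  ∃ M : Matrix (Fin n) (Fin n) F,
    (∀ u : U, ((φ u : Fin n → F)) = M.mulVec (u : Fin n → F)) ∧
    (∀ i, ∃! j, M i j ≠ 0) ∧
    (∀ j, ∃! i, M i j ≠ 0)

/-- S is q-projection-forcing: every linear map over a field of order q realizing S
is a projection. -/
def ProjectionForcing (q : ℕ) (S : Multiset ℤ) : Prop :=
  ∀ (F : Type) [Field F] [Fintype F] [DecidableEq F], Fintype.card F = q →
    ∀ (n m : ℕ) (U : Submodule F (Fin n → F)) (V : Submodule F (Fin m → F))
      (φ : U →ₗ[F] V), projWeightChanges φ = S → IsProjection φ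

/-- The matrix M_{k,q}: rows and columns indexed by points of PG(k-1,q), with (v,w)
entry 0 if v ⬝ w = 0 and 1 otherwise. -/
def Mkq (F : Type) [Field F] [Fintype F] [DecidableEq F] (k : ℕ) :
    Matrix (Projectivization F (Fin k → F)) (Projectivization F (Fin k → F)) ℝ :=
  Matrix.of fun v w => if dotProduct v.rep w.rep = 0 then (0 : ℝ) else 1

/-- The q-ary split difference of a multiset S. -/
def splitDiff (q k : ℕ) (S : Multiset ℤ) : ℤ :=
  (((S.sort (· ≤ ·)).take (q ^ (k - 1))).sum) -
    ((q : ℤ) - 1) * (((S.sort (· ≤ ·)).drop (q ^ (k - 1))).sum)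

end

/-! ### Auxiliary development -/

open Matrix Function

section F2Basics

lemma f2_cases (x : ZMod 2) : x = 0 ∨ x = 1 := by revert x; decide

lemma f2_ne_zero (x : ZMod 2) : x ≠ 0 ↔ x = 1 := by revert x; decide

/-- indicator of `1` in `ZMod 2` -/
def chi (x : ZMod 2) : ℤ := if x = 1 then 1 else 0

/-- signed indicator of `1` in `ZMod 2` -/
def eps (x : ZMod 2) : ℤ := if x = 1 then 1 else -1

lemma eps_cases (x : ZMod 2) : eps x = 1 ∨ eps x = -1 := by revert x; decide

lemma eps_mul_chi (x y : ZMod 2) :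
    eps x * chi y = 2 * (if x = 1 ∧ y = 1 then (1:ℤ) else 0) - (if y = 1 then 1 else 0) := by
  revert x y; decide

lemma eps_eq (x : ZMod 2) : eps x = 2 * chi x - 1 := by revert x; decide

lemma eps_mul_chi_self (x : ZMod 2) : eps x * chi x = chi x := by revert x; decide

end F2Basics

section ProjEquiv
variable {V : Type*} [AddCommGroup V] [Module (ZMod 2) V]

/-- Over `ZMod 2`, projectivization is just the set of nonzero vectors. -/
noncomputable def projEquiv : Projectivization (ZMod 2) V ≃ {v : V // v ≠ 0} where
  toFun p := ⟨p.rep, p.rep_nonzero⟩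
  invFun v := Projectivization.mk (ZMod 2) v.1 v.2
  left_inv p := p.mk_rep
  right_inv v := by
    obtain ⟨a, ha⟩ := Projectivization.exists_smul_eq_mk_rep (ZMod 2) v.1 v.2
    have ha1 : a = 1 := Units.ext ((f2_ne_zero _).mp (Units.ne_zero a))
    subst ha1
    ext
    simp only [← ha, one_smul]

end ProjEquiv

section Counting
variable {V : Type*} [AddCommGroup V] [Module (ZMod 2) V] [Fintype V]
set_option linter.unusedSectionVars false

lemma card_fiber_eq_card_fiber {W : Type*} [AddCommGroup W] [Module (ZMod 2) W]
    (L : V →ₗ[ZMod 2] W) (x y : W) (hx : ∃ v, L v = x) (hy : ∃ v, L v = y) :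
    Nat.card {v // L v = x} = Nat.card {v // L v = y} := by
  obtain ⟨vx, hvx⟩ := hx
  obtain ⟨vy, hvy⟩ := hy
  refine Nat.card_congr ⟨fun v => ⟨v.1 + (vy - vx), by simp [map_add, map_sub, v.2, hvx, hvy]⟩,
    fun v => ⟨v.1 + (vx - vy), by simp [map_add, map_sub, v.2, hvx, hvy]⟩, ?_, ?_⟩ <;>
    intro v <;> ext <;> simp <;> abel

lemma card_fiber_mul {W : Type*} [AddCommGroup W] [Module (ZMod 2) W] [Fintype W]
    (L : V →ₗ[ZMod 2] W) (hs : Surjective L) (x : W) :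
    Nat.card {v // L v = x} * Fintype.card W = Fintype.card V := by
  classical
  have h1 : Fintype.card V = ∑ y : W, Nat.card {v // L v = y} := by
    rw [← Fintype.card_congr (Equiv.sigmaFiberEquiv L)]
    rw [Fintype.card_sigma]
    exact Finset.sum_congr rfl fun y _ => (Nat.card_eq_fintype_card).symm
  have h2 : ∀ y : W, Nat.card {v // L v = y} = Nat.card {v // L v = x} :=
    fun y => card_fiber_eq_card_fiber L y x (hs y) (hs x)
  rw [h1, Finset.sum_congr rfl (fun y _ => h2 y), Finset.sum_const, Finset.card_univ,
    smul_eq_mul, mul_comm]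

lemma card_level_one (f : V →ₗ[ZMod 2] ZMod 2) (hf : f ≠ 0) :
    Nat.card {v // f v = 1} * 2 = Fintype.card V := by
  have hs : Surjective f := by
    intro x
    obtain ⟨v, hv⟩ : ∃ v, f v ≠ 0 := by
      by_contra h
      push_neg at h
      exact hf (LinearMap.ext fun v => by simpa using (h v))
    rcases f2_cases x with rfl | rfl
    · exact ⟨0, map_zero f⟩
    · exact ⟨v, (f2_ne_zero _).mp hv⟩
  simpa using card_fiber_mul f hs 1

lemma card_level_two (f g : V →ₗ[ZMod 2] ZMod 2) (hf : f ≠ 0) (hg : g ≠ 0) (hfg : f ≠ g) :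
    Nat.card {v // f v = 1 ∧ g v = 1} * 4 = Fintype.card V := by
  classical
  set L : V →ₗ[ZMod 2] ZMod 2 × ZMod 2 := f.prod g with hL
  have hs : Surjective L := by
    obtain ⟨z, hz⟩ : ∃ z, f z ≠ g z := by
      by_contra h
      push_neg at h
      exact hfg (LinearMap.ext fun v => by simpa using (h v))
    obtain ⟨y, hy0⟩ : ∃ y, g y = 1 := by
      obtain ⟨y, hy⟩ : ∃ y, g y ≠ 0 := by
        by_contra h; push_neg at h
        exact hg (LinearMap.ext fun v => by simpa using (h v))
      exact ⟨y, (f2_ne_zero _).mp hy⟩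
    obtain ⟨y', hy0'⟩ : ∃ y, f y = 1 := by
      obtain ⟨y, hy⟩ : ∃ y, f y ≠ 0 := by
        by_contra h; push_neg at h
        exact hf (LinearMap.ext fun v => by simpa using (h v))
      exact ⟨y, (f2_ne_zero _).mp hy⟩
    intro x
    have h00 : ∃ v, L v = (0, 0) := ⟨0, by simp [hL]⟩
    have hfz : f z = 1 ∧ g z = 0 ∨ f z = 0 ∧ g z = 1 := by
      rcases f2_cases (f z) with h1 | h1 <;> rcases f2_cases (g z) with h2 | h2 <;>
        simp_all
    have main : (∃ v, L v = (1, 0)) ∧ (∃ v, L v = (0, 1)) ∧ (∃ v, L v = (1, 1)) := by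
      rcases hfz with ⟨h1, h2⟩ | ⟨h1, h2⟩
      · refine ⟨⟨z, by simp [hL, h1, h2]⟩, ?_, ?_⟩
        · rcases f2_cases (f y) with h3 | h3
          · exact ⟨y, by simp [hL, h3, hy0]⟩
          · exact ⟨y + z, by simp [hL, h3, hy0, h1, h2]; decide⟩
        · rcases f2_cases (f y) with h3 | h3
          · exact ⟨y + z, by simp [hL, h3, hy0, h1, h2]⟩
          · exact ⟨y, by simp [hL, h3, hy0]⟩
      · refine ⟨?_, ⟨z, by simp [hL, h1, h2]⟩, ?_⟩
        · rcases f2_cases (g y') with h3 | h3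
          · exact ⟨y', by simp [hL, h3, hy0']⟩
          · exact ⟨y' + z, by simp [hL, h3, hy0', h1, h2]; decide⟩
        · rcases f2_cases (g y') with h3 | h3
          · exact ⟨y' + z, by simp [hL, h3, hy0', h1, h2]⟩
          · exact ⟨y', by simp [hL, h3, hy0']⟩
    obtain ⟨m1, m2, m3⟩ := main
    have : x = (0,0) ∨ x = (1,0) ∨ x = (0,1) ∨ x = (1,1) := by
      rcases f2_cases x.1 with h1 | h1 <;> rcases f2_cases x.2 with h2 | h2 <;>
        [skip;skip;skip;skip] <;>
        [exact Or.inl (Prod.ext h1 h2); exact Or.inr (Or.inr (Or.inl (Prod.ext h1 h2)));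
         exact Or.inr (Or.inl (Prod.ext h1 h2)); exact Or.inr (Or.inr (Or.inr (Prod.ext h1 h2)))]
    rcases this with rfl | rfl | rfl | rfl <;> assumption
  have := card_fiber_mul L hs (1, 1)
  rw [show Fintype.card (ZMod 2 × ZMod 2) = 4 by decide] at this
  rw [← this]
  congr 1
  apply Nat.card_congr
  exact Equiv.subtypeEquivRight fun v => by simp [hL, Prod.ext_iff]

lemma sum_ind (p : V → Prop) [DecidablePred p] :
    ∑ v : V, (if p v then (1 : ℤ) else 0) = Nat.card {v // p v} := by
  classical
  rw [Finset.sum_boole, Nat.card_eq_fintype_card, Fintype.card_subtype]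

lemma sum_chi_linear {k : ℕ} (hcard : Fintype.card V = 2 ^ k) (hk : 1 ≤ k)
    (h : V →ₗ[ZMod 2] ZMod 2) (hh : h ≠ 0) :
    ∑ v : V, chi (h v) = 2 ^ (k - 1) := by
  classical
  have := card_level_one h hh
  obtain ⟨K, rfl⟩ : ∃ K, k = K + 1 := ⟨k - 1, by omega⟩
  unfold chi
  rw [sum_ind]
  rw [hcard] at this
  have h2 : (2:ℕ) ^ (K + 1) = 2 ^ K * 2 := by ring
  have e : Nat.card {v // h v = 1} = 2 ^ K := by omega
  rw [show K + 1 - 1 = K from rfl]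
  exact_mod_cast e

lemma hn_sum {n : ℕ} (x : Fin n → ZMod 2) : (hammingNorm x : ℤ) = ∑ i, chi (x i) := by
  classical
  unfold hammingNorm chi
  rw [Finset.card_filter]
  push_cast
  refine Finset.sum_congr rfl fun i _ => ?_
  rcases f2_cases (x i) with h | h <;> simp [h]

lemma sum_eps_chi_formula (h ψ : V →ₗ[ZMod 2] ZMod 2) :
    ∑ v : V, eps (h v) * chi (ψ v)
      = 2 * (Nat.card {v // h v = 1 ∧ ψ v = 1} : ℤ) - (Nat.card {v // ψ v = 1} : ℤ) := by
  classical
  calc ∑ v : V, eps (h v) * chi (ψ v)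
      = ∑ v : V, (2 * (if h v = 1 ∧ ψ v = 1 then (1:ℤ) else 0) - (if ψ v = 1 then 1 else 0)) := by
        refine Finset.sum_congr rfl fun v _ => ?_
        unfold chi
        exact eps_mul_chi _ _
    _ = 2 * ∑ v : V, (if h v = 1 ∧ ψ v = 1 then (1:ℤ) else 0)
          - ∑ v : V, (if ψ v = 1 then (1:ℤ) else 0) := by
        rw [Finset.sum_sub_distrib, Finset.mul_sum]
    _ = _ := by rw [sum_ind, sum_ind]

lemma sum_eps_chi_ne {k : ℕ} (hcard : Fintype.card V = 2 ^ k) (hk : 2 ≤ k)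
    (h ψ : V →ₗ[ZMod 2] ZMod 2) (hh : h ≠ 0) (hψ : ψ ≠ 0) (hne : h ≠ ψ) :
    ∑ v : V, eps (h v) * chi (ψ v) = 0 := by
  classical
  obtain ⟨K, rfl⟩ : ∃ K, k = K + 2 := ⟨k - 2, by omega⟩
  rw [sum_eps_chi_formula]
  have c1 := card_level_one ψ hψ
  have c2 := card_level_two h ψ hh hψ hne
  rw [hcard] at c1 c2
  have h4 : (2:ℕ) ^ (K + 2) = 2 ^ K * 4 := by ring
  have h2 : (2:ℕ) ^ (K + 2) = 2 ^ (K+1) * 2 := by ring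
  have e1 : Nat.card {v // h v = 1 ∧ ψ v = 1} = 2 ^ K := by omega
  have e2 : Nat.card {v // ψ v = 1} = 2 ^ (K + 1) := by omega
  rw [e1, e2]
  push_cast
  ring

lemma sum_eps_chi_self {k : ℕ} (hcard : Fintype.card V = 2 ^ k) (hk : 1 ≤ k)
    (h : V →ₗ[ZMod 2] ZMod 2) (hh : h ≠ 0) :
    ∑ v : V, eps (h v) * chi (h v) = 2 ^ (k - 1) := by
  calc ∑ v : V, eps (h v) * chi (h v) = ∑ v : V, chi (h v) :=
        Finset.sum_congr rfl fun v _ => eps_mul_chi_self _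
    _ = 2 ^ (k - 1) := sum_chi_linear hcard hk h hh

lemma sum_eps_chi_zero_right (h : V →ₗ[ZMod 2] ZMod 2) :
    ∑ v : V, eps (h v) * chi ((0 : V →ₗ[ZMod 2] ZMod 2) v) = 0 := by
  have : ∀ v : V, eps (h v) * chi ((0 : V →ₗ[ZMod 2] ZMod 2) v) = 0 := by
    intro v
    rw [LinearMap.zero_apply, show chi 0 = 0 from rfl, mul_zero]
  rw [Finset.sum_congr rfl fun v _ => this v, Finset.sum_const, smul_zero]

lemma t_dvd {k : ℕ} (hcard : Fintype.card V = 2 ^ k) (hk : 2 ≤ k)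
    (h ψ : V →ₗ[ZMod 2] ZMod 2) (hh : h ≠ 0) :
    (2 ^ (k - 1) : ℤ) ∣ ∑ v : V, eps (h v) * chi (ψ v) := by
  by_cases hψ : ψ = 0
  · subst hψ; rw [sum_eps_chi_zero_right]; exact dvd_zero _
  by_cases hne : h = ψ
  · subst hne; rw [sum_eps_chi_self hcard (by omega) h hh]
  · rw [sum_eps_chi_ne hcard hk h ψ hh hψ hne]; exact dvd_zero _

lemma sum_eps_zero {k : ℕ} (hcard : Fintype.card V = 2 ^ k) (hk : 1 ≤ k)
    (h : V →ₗ[ZMod 2] ZMod 2) (hh : h ≠ 0) :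
    ∑ v : V, eps (h v) = 0 := by
  calc ∑ v : V, eps (h v) = ∑ v : V, (2 * chi (h v) - 1) :=
        Finset.sum_congr rfl fun v _ => eps_eq _
    _ = 2 * ∑ v : V, chi (h v) - Fintype.card V := by
        rw [Finset.sum_sub_distrib, Finset.mul_sum]
        simp [Finset.card_univ]
    _ = 0 := by
        rw [sum_chi_linear hcard hk h hh, hcard]
        have : (2:ℤ) ^ k = 2 * 2 ^ (k - 1) := by
          rw [← pow_succ']
          congr 1
          omega
        push_cast
        rw [this]
        ring

lemma side_dvd {k : ℕ} (hcard : Fintype.card V = 2 ^ k) (hk : 2 ≤ k)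
    (h : V →ₗ[ZMod 2] ZMod 2) (hh : h ≠ 0) {ι : Type*} [Fintype ι]
    (e : ι → (V →ₗ[ZMod 2] ZMod 2)) :
    (2 ^ (k - 1) : ℤ) ∣ ∑ v : V, eps (h v) * (∑ i, chi (e i v)) := by
  have hc : ∑ v : V, eps (h v) * (∑ i, chi (e i v))
      = ∑ i, ∑ v : V, eps (h v) * chi (e i v) := by
    rw [Finset.sum_comm]
    exact Finset.sum_congr rfl fun v _ => Finset.mul_sum _ _ _
  rw [hc]
  exact Finset.dvd_sum fun i _ => t_dvd hcard hk h (e i) hh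

lemma eval_T {k : ℕ} (hcard : Fintype.card V = 2 ^ k) (hk : 1 ≤ k)
    (h : V →ₗ[ZMod 2] ZMod 2) (hh : h ≠ 0) (g : V → ℤ) (a b c : ℤ) (p q : V)
    (hp : p ≠ 0) (hq : q ≠ 0) (hpq : p ≠ q) (hg0 : g 0 = 0) (hgp : g p = b) (hgq : g q = c)
    (hga : ∀ v, v ≠ 0 → v ≠ p → v ≠ q → g v = a) :
    ∑ v : V, eps (h v) * g v = a + (b - a) * eps (h p) + (c - a) * eps (h q) := by
  classical
  have hrep : ∀ v : V, g v = a * (1 - (if v = 0 then 1 else 0)) + (b - a) * (if v = p then 1 else 0)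
      + (c - a) * (if v = q then 1 else 0) := by
    intro v
    by_cases h0 : v = 0
    · subst h0
      rw [hg0, if_pos rfl, if_neg (fun e => hp e.symm), if_neg (fun e => hq e.symm)]
      ring
    · by_cases hvp : v = p
      · subst hvp
        rw [hgp, if_neg h0, if_pos rfl, if_neg hpq]
        ring
      · by_cases hvq : v = q
        · subst hvq
          rw [hgq, if_neg h0, if_neg hvp, if_pos rfl]
          ring
        · rw [hga v h0 hvp hvq, if_neg h0, if_neg hvp, if_neg hvq]
          ring
  calc ∑ v : V, eps (h v) * g v
      = ∑ v : V, (a * eps (h v) - a * (if v = 0 then eps (h v) else 0)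
          + (b - a) * (if v = p then eps (h v) else 0)
          + (c - a) * (if v = q then eps (h v) else 0)) := by
        refine Finset.sum_congr rfl fun v _ => ?_
        rw [hrep v]
        split_ifs <;> ring
    _ = a * (∑ v : V, eps (h v)) - a * (∑ v : V, if v = 0 then eps (h v) else 0)
          + (b - a) * (∑ v : V, if v = p then eps (h v) else 0)
          + (c - a) * (∑ v : V, if v = q then eps (h v) else 0) := by
        rw [Finset.sum_add_distrib, Finset.sum_add_distrib, Finset.sum_sub_distrib,
          ← Finset.mul_sum, ← Finset.mul_sum, ← Finset.mul_sum, ← Finset.mul_sum]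
    _ = a + (b - a) * eps (h p) + (c - a) * eps (h q) := by
        rw [Finset.sum_ite_eq' Finset.univ (0:V) (fun v => eps (h v)),
            Finset.sum_ite_eq' Finset.univ p (fun v => eps (h v)),
            Finset.sum_ite_eq' Finset.univ q (fun v => eps (h v)),
            sum_eps_zero hcard hk h hh]
        rw [if_pos (Finset.mem_univ _), if_pos (Finset.mem_univ _), if_pos (Finset.mem_univ _)]
        rw [map_zero, show eps 0 = -1 by decide]
        ring

end Counting

section ms
variable {α : Type*} [Fintype α] [DecidableEq α]

lemma ms_cons_shape (N : ℕ) (a b c : ℤ) :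
    Multiset.replicate N a + {b, c} = b ::ₘ c ::ₘ Multiset.replicate N a := by
  rw [show ({b,c} : Multiset ℤ) = b ::ₘ c ::ₘ 0 from rfl]
  rw [Multiset.add_cons, Multiset.add_cons]
  simp

lemma ms_extract (g : α → ℤ) {N : ℕ} {a b c : ℤ}
    (h : Multiset.map g Finset.univ.val = Multiset.replicate N a + {b, c}) :
    ∃ p q : α, p ≠ q ∧ g p = b ∧ g q = c ∧ ∀ r, r ≠ p → r ≠ q → g r = a := by
  rw [ms_cons_shape] at h
  have hb : b ∈ Multiset.map g Finset.univ.val := by rw [h]; simp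
  obtain ⟨p, _, hp⟩ := Multiset.mem_map.mp hb
  have hpmem : p ∈ (Finset.univ : Finset α).val := Finset.mem_univ_val p
  have h1 : Multiset.map g Finset.univ.val = b ::ₘ Multiset.map g (Finset.univ.val.erase p) := by
    conv_lhs => rw [← Multiset.cons_erase hpmem]
    rw [Multiset.map_cons, hp]
  rw [h1] at h
  have h2 : Multiset.map g (Finset.univ.val.erase p) = c ::ₘ Multiset.replicate N a :=
    (Multiset.cons_inj_right b).mp h
  have hc : c ∈ Multiset.map g (Finset.univ.val.erase p) := by rw [h2]; simp
  obtain ⟨q, hqmem, hq⟩ := Multiset.mem_map.mp hc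
  have hnd : (Finset.univ : Finset α).val.Nodup := Finset.univ.nodup
  have hqp : q ≠ p := (hnd.mem_erase_iff.mp hqmem).1
  have h3 : Multiset.map g (Finset.univ.val.erase p)
      = c ::ₘ Multiset.map g ((Finset.univ.val.erase p).erase q) := by
    conv_lhs => rw [← Multiset.cons_erase hqmem]
    rw [Multiset.map_cons, hq]
  rw [h3] at h2
  have h4 : Multiset.map g ((Finset.univ.val.erase p).erase q) = Multiset.replicate N a :=
    (Multiset.cons_inj_right c).mp h2
  refine ⟨p, q, fun e => hqp e.symm, hp, hq, fun r hrp hrq => ?_⟩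
  have hr : r ∈ (Finset.univ.val.erase p).erase q := by
    rw [(hnd.erase p).mem_erase_iff, hnd.mem_erase_iff]
    exact ⟨hrq, hrp, Finset.mem_univ_val r⟩
  exact Multiset.eq_of_mem_replicate (h4 ▸ Multiset.mem_map_of_mem g hr)

lemma ms_build (g : α → ℤ) {a b c : ℤ} {p q : α} (hpq : p ≠ q)
    (hb : g p = b) (hc : g q = c) (ha : ∀ r, r ≠ p → r ≠ q → g r = a) :
    Multiset.map g Finset.univ.val
      = Multiset.replicate (Fintype.card α - 2) a + {b, c} := by
  rw [ms_cons_shape]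
  have hnd : (Finset.univ : Finset α).val.Nodup := Finset.univ.nodup
  have hpmem : p ∈ (Finset.univ : Finset α).val := Finset.mem_univ_val p
  have hqmem : q ∈ Finset.univ.val.erase p := by
    rw [hnd.mem_erase_iff]; exact ⟨fun e => hpq e.symm, Finset.mem_univ_val q⟩
  have h1 : (Finset.univ : Finset α).val = p ::ₘ q ::ₘ (Finset.univ.val.erase p).erase q := by
    rw [Multiset.cons_erase hqmem, Multiset.cons_erase hpmem]
  rw [h1, Multiset.map_cons, Multiset.map_cons, hb, hc]
  congr 1
  congr 1
  apply Multiset.eq_replicate.mpr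
  constructor
  · rw [Multiset.card_map, Multiset.card_erase_of_mem hqmem, Multiset.card_erase_of_mem hpmem]
    simp [Finset.card_univ]
    rfl
  · intro x hx
    obtain ⟨r, hrmem, hr⟩ := Multiset.mem_map.mp hx
    rw [(hnd.erase p).mem_erase_iff, hnd.mem_erase_iff] at hrmem
    rw [← hr]
    exact ha r hrmem.2.1 hrmem.1

lemma map_univ_equiv' {β : Type*} [Fintype β] (e : α ≃ β) (f : β → ℤ) :
    Multiset.map (fun a => f (e a)) Finset.univ.val = Multiset.map f Finset.univ.val := by
  have : (Finset.univ : Finset β) = Finset.univ.map e.toEmbedding := (Finset.map_univ_equiv e).symm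
  rw [this, Finset.map_val, Multiset.map_map]
  rfl
end ms

section func
variable {V : Type*} [AddCommGroup V] [Module (ZMod 2) V]

lemma f2cases' (x : ZMod 2) : x = 0 ∨ x = 1 := by revert x; decide

lemma exists_functional (p q : V) (hp : p ≠ 0) (hq : q ≠ 0) (hpq : p ≠ q) (x y : ZMod 2) :
    ∃ h : V →ₗ[ZMod 2] ZMod 2, h p = x ∧ h q = y := by
  have li2 : LinearIndependent (ZMod 2) ![p, q] := by
    rw [LinearIndependent.pair_iff]
    intro s t hst
    rcases f2cases' s with rfl | rfl <;> rcases f2cases' t with rfl | rfl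
    · exact ⟨rfl, rfl⟩
    · simp at hst; exact absurd hst hq
    · simp at hst; exact absurd hst hp
    · exfalso
      apply hpq
      simp only [one_smul] at hst
      have : p + q + q = q := by rw [hst]; simp
      rwa [add_assoc, ← two_smul (ZMod 2) q, show (2 : ZMod 2) = 0 from rfl, zero_smul, add_zero] at this
  have li : LinearIndepOn (ZMod 2) id (Set.range ![p, q]) := li2.linearIndepOn_id
  let B := Module.Basis.extend li
  have hpr : p ∈ Set.range ![p, q] := ⟨0, rfl⟩
  have hqr : q ∈ Set.range ![p, q] := ⟨1, rfl⟩
  have hpe : p ∈ li.extend (Set.subset_univ _) := li.subset_extend _ hpr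
  have hqe : q ∈ li.extend (Set.subset_univ _) := li.subset_extend _ hqr
  have hBp : B ⟨p, hpe⟩ = p := Module.Basis.extend_apply_self li ⟨p, hpe⟩
  have hBq : B ⟨q, hqe⟩ = q := Module.Basis.extend_apply_self li ⟨q, hqe⟩
  have hrp : B.repr p = Finsupp.single ⟨p, hpe⟩ 1 := (congrArg B.repr hBp).symm.trans (B.repr_self _)
  have hrq : B.repr q = Finsupp.single ⟨q, hqe⟩ 1 := (congrArg B.repr hBq).symm.trans (B.repr_self _)
  have hne : (⟨p, hpe⟩ : li.extend (Set.subset_univ _)) ≠ ⟨q, hqe⟩ := by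
    intro hcontra; exact hpq (congrArg Subtype.val hcontra)
  refine ⟨x • B.coord ⟨p, hpe⟩ + y • B.coord ⟨q, hqe⟩, ?_, ?_⟩
  · simp only [LinearMap.add_apply, LinearMap.smul_apply, Module.Basis.coord_apply, hrp]
    rw [Finsupp.single_eq_same, Finsupp.single_eq_of_ne (fun h => hne h.symm)]
    simp
  · simp only [LinearMap.add_apply, LinearMap.smul_apply, Module.Basis.coord_apply, hrq]
    rw [Finsupp.single_eq_same, Finsupp.single_eq_of_ne hne]
    simp
end func

section Arith

lemma arith_forward {k : ℕ} (hk : 2 ≤ k) (a b c : ℕ)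
    (h1 : (2^(k-1):ℤ) ∣ ((a:ℤ) + b - c)) (h2 : (2^(k-1):ℤ) ∣ ((a:ℤ) - b + c))
    (h3 : (2^(k-1):ℤ) ∣ (-(a:ℤ) + b + c)) :
    2^(k-2) ∣ a ∧ 2^(k-2) ∣ b ∧ 2^(k-2) ∣ c ∧ 2^(k-1) ∣ (a+b+c) := by
  have hk1 : k - 1 = (k-2) + 1 := by omega
  have key : ∀ x : ℕ, (2^(k-1):ℤ) ∣ (2 * x) → 2^(k-2) ∣ x := by
    intro x hx
    rw [hk1, pow_succ, mul_comm ((2:ℤ)^(k-2)) 2] at hx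
    have h2 := (mul_dvd_mul_iff_left (by norm_num : (2:ℤ) ≠ 0)).mp hx
    exact_mod_cast h2
  have da : 2^(k-2) ∣ a := key a (by have := dvd_add h1 h2; convert this using 1; rfl; push_cast; ring)
  have db : 2^(k-2) ∣ b := key b (by have := dvd_add h1 h3; convert this using 1; rfl; push_cast; ring)
  have dc : 2^(k-2) ∣ c := key c (by have := dvd_add h2 h3; convert this using 1; rfl; push_cast; ring)
  refine ⟨da, db, dc, ?_⟩
  have h2a : (2^(k-1):ℤ) ∣ (2 * a) := by
    obtain ⟨A, hA⟩ := da
    refine ⟨A, ?_⟩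
    rw [hk1, pow_succ]
    push_cast [hA]
    ring
  have : (2^(k-1):ℤ) ∣ ((a:ℤ) + b + c) := by
    have := dvd_add h3 h2a
    convert this using 1
    rfl
    push_cast
    ring
  exact_mod_cast this

lemma arith_rhs_iff {k : ℕ} (hk : 2 ≤ k) (a b c : ℕ) :
    ((2 ^ (k - 2) ∣ a ∧ 2 ^ (k - 2) ∣ b ∧ 2 ^ (k - 2) ∣ c) ∧
        ((2 ^ (k - 1) ∣ a ∧ 2 ^ (k - 1) ∣ b ∧ 2 ^ (k - 1) ∣ c) ∨
         (2 ^ (k - 1) ∣ a ∧ ¬ 2 ^ (k - 1) ∣ b ∧ ¬ 2 ^ (k - 1) ∣ c) ∨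
         (¬ 2 ^ (k - 1) ∣ a ∧ 2 ^ (k - 1) ∣ b ∧ ¬ 2 ^ (k - 1) ∣ c) ∨
         (¬ 2 ^ (k - 1) ∣ a ∧ ¬ 2 ^ (k - 1) ∣ b ∧ 2 ^ (k - 1) ∣ c)))
      ↔ (2^(k-2) ∣ a ∧ 2^(k-2) ∣ b ∧ 2^(k-2) ∣ c ∧ 2^(k-1) ∣ (a+b+c)) := by
  have hk1 : k - 1 = (k-2) + 1 := by omega
  have hm : 0 < 2^(k-2) := Nat.pow_pos (by norm_num)
  rw [hk1, pow_succ]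
  constructor
  · rintro ⟨⟨⟨A, rfl⟩, ⟨B, rfl⟩, ⟨C, rfl⟩⟩, hd⟩
    refine ⟨⟨A, rfl⟩, ⟨B, rfl⟩, ⟨C, rfl⟩, ?_⟩
    have hiff : ∀ X : ℕ, (2^(k-2) * 2 ∣ 2^(k-2) * X) ↔ 2 ∣ X := by
      intro X
      rw [Nat.mul_dvd_mul_iff_left hm]
    rw [hiff, hiff, hiff] at hd
    rw [show 2^(k-2)*A + 2^(k-2)*B + 2^(k-2)*C = 2^(k-2)*(A+B+C) by ring, hiff]
    omega
  · rintro ⟨⟨A, rfl⟩, ⟨B, rfl⟩, ⟨C, rfl⟩, hs⟩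
    refine ⟨⟨⟨A, rfl⟩, ⟨B, rfl⟩, ⟨C, rfl⟩⟩, ?_⟩
    have hiff : ∀ X : ℕ, (2^(k-2) * 2 ∣ 2^(k-2) * X) ↔ 2 ∣ X := by
      intro X
      rw [Nat.mul_dvd_mul_iff_left hm]
    rw [show 2^(k-2)*A + 2^(k-2)*B + 2^(k-2)*C = 2^(k-2)*(A+B+C) by ring, hiff] at hs
    rw [hiff, hiff, hiff]
    omega

end Arith

section Construction
variable {k : ℕ}

/-- the functional `f ↦ f ⬝ᵥ u`, linear in `f`. -/
def dotL (u : Fin k → ZMod 2) : (Fin k → ZMod 2) →ₗ[ZMod 2] ZMod 2 where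
  toFun f := f ⬝ᵥ u
  map_add' f g := add_dotProduct f g u
  map_smul' s f := by simp [smul_dotProduct, smul_eq_mul]

lemma dotL_single (u : Fin k → ZMod 2) (j : Fin k) : dotL u (Pi.single j 1) = u j := by
  show Pi.single j 1 ⬝ᵥ u = u j
  rw [single_dotProduct, one_mul]

lemma dotL_eq_zero_iff (u : Fin k → ZMod 2) : dotL u = 0 ↔ u = 0 := by
  constructor
  · intro h
    funext j
    have := congrArg (fun L : (Fin k → ZMod 2) →ₗ[ZMod 2] ZMod 2 => L (Pi.single j 1)) h
    simpa [dotL_single] using this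
  · rintro rfl
    apply LinearMap.ext
    intro f
    show f ⬝ᵥ 0 = 0
    simp

lemma dotL_inj : Injective (dotL : (Fin k → ZMod 2) → _) := by
  intro u v h
  funext j
  have := congrArg (fun L : (Fin k → ZMod 2) →ₗ[ZMod 2] ZMod 2 => L (Pi.single j 1)) h
  simpa [dotL_single] using this

lemma cardW : Fintype.card (Fin k → ZMod 2) = 2 ^ k := by
  rw [Fintype.card_fun]
  norm_num

lemma sumW_chi (hk : 1 ≤ k) (u : Fin k → ZMod 2) (hu : u ≠ 0) :
    ∑ f : Fin k → ZMod 2, chi (f ⬝ᵥ u) = 2 ^ (k - 1) :=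
  sum_chi_linear cardW hk (dotL u) (fun h => hu ((dotL_eq_zero_iff u).mp h))

lemma sumW_eps_chi (hk : 2 ≤ k) (p u : Fin k → ZMod 2) (hp : p ≠ 0) (hu : u ≠ 0) :
    ∑ f : Fin k → ZMod 2, eps (f ⬝ᵥ p) * chi (f ⬝ᵥ u)
      = if u = p then (2 ^ (k - 1) : ℤ) else 0 := by
  by_cases h : u = p
  · subst h
    rw [if_pos rfl]
    exact sum_eps_chi_self cardW (by omega) (dotL u) (fun h => hu ((dotL_eq_zero_iff u).mp h))
  · rw [if_neg h]
    exact sum_eps_chi_ne cardW hk (dotL p) (dotL u)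
      (fun hh => hp ((dotL_eq_zero_iff p).mp hh))
      (fun hh => hu ((dotL_eq_zero_iff u).mp hh))
      (fun hh => h (dotL_inj hh).symm)

end Construction

section Construction2
variable {k : ℕ} (mm : (Fin k → ZMod 2) → ℕ)

/-- number of coordinates -/
def NN : ℕ := Fintype.card (Σ f : Fin k → ZMod 2, Fin (mm f))

/-- indexing equivalence -/
noncomputable def idxE : Fin (NN mm) ≃ Σ f : Fin k → ZMod 2, Fin (mm f) :=
  (Fintype.equivFin _).symm

/-- the embedding with multiplicities `mm` -/
noncomputable def EE : (Fin k → ZMod 2) →ₗ[ZMod 2] (Fin (NN mm) → ZMod 2) where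
  toFun u := fun i => (idxE mm i).1 ⬝ᵥ u
  map_add' u v := by funext i; simp [dotProduct_add]
  map_smul' s u := by funext i; simp [dotProduct_smul, smul_eq_mul]

lemma hn_EE (u : Fin k → ZMod 2) :
    (hammingNorm (EE mm u) : ℤ) = ∑ f : Fin k → ZMod 2, (mm f : ℤ) * chi (f ⬝ᵥ u) := by
  rw [hn_sum]
  have h1 : ∑ i : Fin (NN mm), chi (EE mm u i)
      = ∑ s : (Σ f : Fin k → ZMod 2, Fin (mm f)), chi (s.1 ⬝ᵥ u) := by
    rw [← Equiv.sum_comp (idxE mm) (fun s => chi (s.1 ⬝ᵥ u))]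
    rfl
  rw [h1, ← Finset.univ_sigma_univ, Finset.sum_sigma]
  refine Finset.sum_congr rfl fun f _ => ?_
  have : ∀ s : Fin (mm f), chi ((⟨f, s⟩ : Σ f : Fin k → ZMod 2, Fin (mm f)).fst ⬝ᵥ u)
      = chi (f ⬝ᵥ u) := fun s => rfl
  rw [Finset.sum_congr rfl fun s _ => this s, Finset.sum_const, Finset.card_univ,
    Fintype.card_fin, nsmul_eq_mul]

lemma EE_inj (hmm : ∀ f, f ≠ 0 → 1 ≤ mm f) : Injective (EE mm) := by
  rw [injective_iff_map_eq_zero]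
  intro u hu
  by_contra hu0
  obtain ⟨j, hj⟩ : ∃ j, u j ≠ 0 := by
    by_contra h
    push_neg at h
    exact hu0 (funext h)
  have hsingle : (Pi.single j 1 : Fin k → ZMod 2) ≠ 0 := by
    intro h
    have := congrFun h j
    rw [Pi.single_eq_same] at this
    exact one_ne_zero this
  have h0 := congrFun hu ((idxE mm).symm ⟨Pi.single j 1, ⟨0, hmm _ hsingle⟩⟩)
  rw [show EE mm u ((idxE mm).symm ⟨Pi.single j 1, ⟨0, hmm _ hsingle⟩⟩)
      = (idxE mm ((idxE mm).symm ⟨Pi.single j 1, ⟨0, hmm _ hsingle⟩⟩)).1 ⬝ᵥ u from rfl,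
    Equiv.apply_symm_apply] at h0
  simp only [Pi.zero_apply] at h0
  have h2 : Pi.single j 1 ⬝ᵥ u = (0 : ZMod 2) := h0
  rw [single_dotProduct, one_mul] at h2
  exact hj h2

end Construction2

section Forward

lemma forward_main (k a b c : ℕ) (hk : 2 ≤ k)
    (hr : Realizes (ZMod 2) (Multiset.replicate (2 ^ k - 3) (a : ℤ) + {(b : ℤ), (c : ℤ)})) :
    2^(k-2) ∣ a ∧ 2^(k-2) ∣ b ∧ 2^(k-2) ∣ c ∧ 2^(k-1) ∣ (a+b+c) := by
  classical
  obtain ⟨n, m, U, V₀, φ, hφ⟩ := hr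
  haveI : Fintype ↥U := Fintype.ofFinite _
  set g : ↥U → ℤ := fun v =>
    (hammingNorm (v : Fin n → ZMod 2) : ℤ) - (hammingNorm ((φ v : V₀) : Fin m → ZMod 2) : ℤ)
    with hgdef
  have hms : Multiset.map (fun w : {v : ↥U // v ≠ 0} => g w.1) Finset.univ.val
      = Multiset.replicate (2 ^ k - 3) (a : ℤ) + {(b : ℤ), (c : ℤ)} := by
    have hφ' : Multiset.map
        (fun p : Projectivization (ZMod 2) ↥U => (fun w : {v : ↥U // v ≠ 0} => g w.1) (projEquiv p))
        Finset.univ.val = Multiset.replicate (2 ^ k - 3) (a : ℤ) + {(b : ℤ), (c : ℤ)} := hφ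
    exact (map_univ_equiv' (projEquiv (V := ↥U)) (fun w : {v : ↥U // v ≠ 0} => g w.1)).symm.trans hφ'
  have hfour : (4:ℕ) ≤ 2^k := by
    calc (4:ℕ) = 2^2 := by norm_num
      _ ≤ 2^k := Nat.pow_le_pow_right (by norm_num) hk
  have hc1 : Nat.card {v : ↥U // v ≠ 0} = 2^k - 3 + 2 := by
    have hcards := congrArg Multiset.card hms
    rw [Multiset.card_map] at hcards
    rw [Nat.card_eq_fintype_card, ← Finset.card_univ]
    rw [show (Finset.univ : Finset {v : ↥U // v ≠ 0}).card = Finset.univ.val.card from rfl, hcards]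
    rw [Multiset.card_add, Multiset.card_replicate, Multiset.insert_eq_cons,
      Multiset.card_cons, Multiset.card_singleton]
  have hc2 : Nat.card {v : ↥U // v ≠ 0} = Nat.card ↥U - 1 := by
    have t := Fintype.card_subtype_compl (fun v : ↥U => v = 0)
    rw [Fintype.card_subtype_eq (0 : ↥U)] at t
    rw [← Nat.card_eq_fintype_card, ← Nat.card_eq_fintype_card] at t
    exact t
  have hUpos : 1 ≤ Nat.card ↥U := Nat.card_pos
  have hcardU : Fintype.card ↥U = 2^k := by
    rw [← Nat.card_eq_fintype_card]
    omega
  obtain ⟨p', q', hpq', hb', hc', ha'⟩ := ms_extract (fun w : {v : ↥U // v ≠ 0} => g w.1) hms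
  have hp0 : p'.1 ≠ 0 := p'.2
  have hq0 : q'.1 ≠ 0 := q'.2
  have hpq : p'.1 ≠ q'.1 := fun e => hpq' (Subtype.ext e)
  have hga : ∀ v : ↥U, v ≠ 0 → v ≠ p'.1 → v ≠ q'.1 → g v = a := fun v h0 h1 h2 =>
    ha' ⟨v, h0⟩ (fun e => h1 (congrArg Subtype.val e)) (fun e => h2 (congrArg Subtype.val e))
  have hg0 : g 0 = 0 := by
    show (hammingNorm ((0:↥U) : Fin n → ZMod 2) : ℤ)
      - (hammingNorm ((φ 0 : V₀) : Fin m → ZMod 2) : ℤ) = 0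
    rw [map_zero φ]
    simp
  have hT : ∀ h : ↥U →ₗ[ZMod 2] ZMod 2, h ≠ 0 →
      (2^(k-1) : ℤ) ∣ (a:ℤ) + ((b:ℤ) - a) * eps (h p'.1) + ((c:ℤ) - a) * eps (h q'.1) := by
    intro h hh
    rw [← eval_T hcardU (by omega) h hh g a b c p'.1 q'.1 hp0 hq0 hpq hg0 hb' hc' hga]
    have hsplit : ∑ v : ↥U, eps (h v) * g v
        = (∑ v : ↥U, eps (h v) * (∑ i : Fin n, chi (((LinearMap.proj i).comp U.subtype) v)))
          - (∑ v : ↥U, eps (h v) *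
              (∑ j : Fin m, chi (((LinearMap.proj j).comp ((V₀.subtype).comp φ)) v))) := by
      rw [← Finset.sum_sub_distrib]
      refine Finset.sum_congr rfl fun v _ => ?_
      have hdec : g v = (∑ i : Fin n, chi (((LinearMap.proj i).comp U.subtype) v))
          - (∑ j : Fin m, chi (((LinearMap.proj j).comp ((V₀.subtype).comp φ)) v)) := by
        show (hammingNorm (v : Fin n → ZMod 2) : ℤ)
          - (hammingNorm ((φ v : V₀) : Fin m → ZMod 2) : ℤ) = _
        rw [hn_sum, hn_sum]
        rfl
      rw [hdec]
      ring
    rw [hsplit]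
    exact dvd_sub (side_dvd hcardU hk h hh _) (side_dvd hcardU hk h hh _)
  obtain ⟨h1, h1p, h1q⟩ := exists_functional p'.1 q'.1 hp0 hq0 hpq 1 0
  obtain ⟨h2, h2p, h2q⟩ := exists_functional p'.1 q'.1 hp0 hq0 hpq 0 1
  obtain ⟨h3, h3p, h3q⟩ := exists_functional p'.1 q'.1 hp0 hq0 hpq 1 1
  have h1ne : h1 ≠ 0 := fun e => by rw [e] at h1p; simp at h1p
  have h2ne : h2 ≠ 0 := fun e => by rw [e] at h2q; simp at h2q
  have h3ne : h3 ≠ 0 := fun e => by rw [e] at h3p; simp at h3p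
  have d1 := hT h1 h1ne
  have d2 := hT h2 h2ne
  have d3 := hT h3 h3ne
  rw [h1p, h1q, show eps 1 = 1 by decide, show eps 0 = -1 by decide] at d1
  rw [h2p, h2q, show eps 1 = 1 by decide, show eps 0 = -1 by decide] at d2
  rw [h3p, h3q, show eps 1 = 1 by decide] at d3
  have e1 : (2^(k-1):ℤ) ∣ ((a:ℤ) + b - c) := by convert d1 using 1; ring
  have e2 : (2^(k-1):ℤ) ∣ ((a:ℤ) - b + c) := by convert d2 using 1; ring
  have e3 : (2^(k-1):ℤ) ∣ (-(a:ℤ) + b + c) := by convert d3 using 1; ring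
  exact arith_forward hk a b c e1 e2 e3

end Forward

section Backward

lemma backward_main (k a b c : ℕ) (hk : 2 ≤ k)
    (hda : 2^(k-2) ∣ a) (hdb : 2^(k-2) ∣ b) (hdc : 2^(k-2) ∣ c)
    (hs : 2^(k-1) ∣ (a+b+c)) :
    Realizes (ZMod 2) (Multiset.replicate (2 ^ k - 3) (a : ℤ) + {(b : ℤ), (c : ℤ)}) := by
  classical
  have h0k : 0 < k := by omega
  have h1k : 1 < k := by omega
  set p₀ : Fin k → ZMod 2 := Pi.single ⟨0, h0k⟩ 1 with hp₀def
  set q₀ : Fin k → ZMod 2 := Pi.single ⟨1, h1k⟩ 1 with hq₀def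
  have hfin01 : (⟨0, h0k⟩ : Fin k) ≠ ⟨1, h1k⟩ := by
    intro h
    have := congrArg Fin.val h
    simp at this
  have hp₀ : p₀ ≠ 0 := by
    intro h
    have := congrFun h ⟨0, h0k⟩
    rw [hp₀def] at this
    rw [Pi.single_eq_same] at this
    exact one_ne_zero this
  have hq₀ : q₀ ≠ 0 := by
    intro h
    have := congrFun h ⟨1, h1k⟩
    rw [hq₀def] at this
    rw [Pi.single_eq_same] at this
    exact one_ne_zero this
  have hpq₀ : p₀ ≠ q₀ := by
    intro h
    have := congrFun h ⟨0, h0k⟩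
    rw [hp₀def, hq₀def, Pi.single_eq_same, Pi.single_eq_of_ne hfin01] at this
    exact one_ne_zero this
  have hk1 : k - 1 = (k - 2) + 1 := by omega
  have hsZ : (2^(k-1):ℤ) ∣ ((a:ℤ)+b+c) := by exact_mod_cast hs
  have key2 : ∀ x : ℕ, 2^(k-2) ∣ x → (2^(k-1):ℤ) ∣ 2*(x:ℤ) := by
    rintro x ⟨X, hX⟩
    exact ⟨X, by rw [hk1]; push_cast [hX]; ring⟩
  have h2a := key2 a hda
  have h2b := key2 b hdb
  have h2c := key2 c hdc
  set D : (Fin k → ZMod 2) → ℤ :=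
    fun f => (a:ℤ) + ((b:ℤ)-a) * eps (f ⬝ᵥ p₀) + ((c:ℤ)-a) * eps (f ⬝ᵥ q₀) with hDdef
  have hDdvd : ∀ f, (2^(k-1):ℤ) ∣ D f := by
    intro f
    show (2^(k-1):ℤ) ∣ (a:ℤ) + ((b:ℤ)-a) * eps (f ⬝ᵥ p₀) + ((c:ℤ)-a) * eps (f ⬝ᵥ q₀)
    rcases eps_cases (f ⬝ᵥ p₀) with h1 | h1 <;> rcases eps_cases (f ⬝ᵥ q₀) with h2 | h2 <;>
      rw [h1, h2]
    · have := dvd_sub hsZ h2a; convert this using 1; rfl; ring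
    · have := dvd_sub hsZ h2c; convert this using 1; rfl; ring
    · have := dvd_sub hsZ h2b; convert this using 1; rfl; ring
    · have := dvd_sub (dvd_add hsZ h2a) (dvd_add h2b h2c); convert this using 1; rfl; ring
  set cf : (Fin k → ZMod 2) → ℤ := fun f => if f = 0 then 0 else D f / 2^(k-1) with hcfdef
  have hcfmul : ∀ f, (2^(k-1):ℤ) * cf f = if f = 0 then 0 else D f := by
    intro f
    show (2^(k-1):ℤ) * (if f = 0 then 0 else D f / 2^(k-1)) = _
    by_cases h : f = 0
    · rw [if_pos h, if_pos h, mul_zero]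
    · rw [if_neg h, if_neg h]
      exact Int.mul_ediv_cancel' (hDdvd f)
  have habc0 : (0:ℤ) ≤ (a:ℤ)+b+c := by positivity
  have hDlb : ∀ f, -((a:ℤ)+b+c) ≤ D f := by
    intro f
    show -((a:ℤ)+b+c) ≤ (a:ℤ) + ((b:ℤ)-a) * eps (f ⬝ᵥ p₀) + ((c:ℤ)-a) * eps (f ⬝ᵥ q₀)
    have ha0 : (0:ℤ) ≤ (a:ℤ) := Int.natCast_nonneg a
    have hb0 : (0:ℤ) ≤ (b:ℤ) := Int.natCast_nonneg b
    have hc0 : (0:ℤ) ≤ (c:ℤ) := Int.natCast_nonneg c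
    rcases eps_cases (f ⬝ᵥ p₀) with h1 | h1 <;> rcases eps_cases (f ⬝ᵥ q₀) with h2 | h2 <;>
      rw [h1, h2] <;> linarith
  have h1pos : (0:ℤ) < 2^(k-1) := by positivity
  have h1le : (1:ℤ) ≤ 2^(k-1) := h1pos
  have hcfge : ∀ f, -((a:ℤ)+b+c) ≤ cf f := by
    intro f
    by_cases h : f = 0
    · have : cf f = 0 := by show (if f = 0 then 0 else D f / 2^(k-1)) = 0; rw [if_pos h]
      rw [this]; linarith
    · have hm := hcfmul f
      rw [if_neg h] at hm
      by_contra hlt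
      push_neg at hlt
      have hcle : cf f ≤ -((a:ℤ)+b+c) - 1 := by omega
      have hb1 : (2^(k-1):ℤ) * cf f ≤ 2^(k-1) * (-((a:ℤ)+b+c) - 1) :=
        mul_le_mul_of_nonneg_left hcle (le_of_lt h1pos)
      have hprod : (0:ℤ) ≤ (2^(k-1) - 1) * ((a:ℤ)+b+c) :=
        mul_nonneg (by linarith) habc0
      have := hDlb f
      nlinarith [this, hm, hb1, hprod, h1le]
  set M : ℤ := (a:ℤ)+b+c+1 with hMdef
  set mU : (Fin k → ZMod 2) → ℕ := fun f => if f = 0 then 0 else (M + cf f).toNat with hmUdef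
  set mV : (Fin k → ZMod 2) → ℕ := fun f => if f = 0 then 0 else M.toNat with hmVdef
  have hMcf : ∀ f, f ≠ 0 → (1:ℤ) ≤ M + cf f := by
    intro f hf
    have := hcfge f
    rw [hMdef]
    linarith
  have hmU1 : ∀ f, f ≠ 0 → 1 ≤ mU f := by
    intro f hf
    have h1 := hMcf f hf
    show 1 ≤ (if f = 0 then 0 else (M + cf f).toNat)
    rw [if_neg hf]
    omega
  have hmV1 : ∀ f, f ≠ 0 → 1 ≤ mV f := by
    intro f hf
    show 1 ≤ (if f = 0 then 0 else M.toNat)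
    rw [if_neg hf, hMdef]
    omega
  have hdiff : ∀ f, (mU f : ℤ) - (mV f : ℤ) = cf f := by
    intro f
    by_cases hf : f = 0
    · show ((if f = 0 then 0 else (M + cf f).toNat : ℕ) : ℤ)
        - ((if f = 0 then 0 else M.toNat : ℕ) : ℤ) = (if f = 0 then 0 else D f / 2^(k-1))
      rw [if_pos hf, if_pos hf, if_pos hf]
      simp
    · show ((if f = 0 then 0 else (M + cf f).toNat : ℕ) : ℤ)
        - ((if f = 0 then 0 else M.toNat : ℕ) : ℤ) = cf f
      rw [if_neg hf, if_neg hf]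
      have h1 := hMcf f hf
      have hM0 : (0:ℤ) ≤ M := by rw [hMdef]; positivity
      rw [Int.toNat_of_nonneg (by linarith), Int.toNat_of_nonneg hM0]
      ring
  -- key pointwise value identity
  have hval : ∀ u : Fin k → ZMod 2, u ≠ 0 →
      (hammingNorm (EE mU u) : ℤ) - (hammingNorm (EE mV u) : ℤ)
        = if u = p₀ then (b:ℤ) else if u = q₀ then (c:ℤ) else (a:ℤ) := by
    intro u hu
    rw [hn_EE, hn_EE, ← Finset.sum_sub_distrib]
    have hstep : ∀ f : Fin k → ZMod 2,
        (mU f : ℤ) * chi (f ⬝ᵥ u) - (mV f : ℤ) * chi (f ⬝ᵥ u) = cf f * chi (f ⬝ᵥ u) :=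
      fun f => by rw [← sub_mul, hdiff f]
    rw [Finset.sum_congr rfl fun f _ => hstep f]
    have hPne : (2^(k-1):ℤ) ≠ 0 := ne_of_gt h1pos
    apply mul_left_cancel₀ hPne
    rw [Finset.mul_sum]
    have hterm : ∀ f : Fin k → ZMod 2,
        (2^(k-1):ℤ) * (cf f * chi (f ⬝ᵥ u)) = D f * chi (f ⬝ᵥ u) := by
      intro f
      rw [← mul_assoc, hcfmul f]
      by_cases hf : f = 0
      · rw [if_pos hf, hf]
        have hz : chi ((0 : Fin k → ZMod 2) ⬝ᵥ u) = 0 := by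
          rw [zero_dotProduct]; rfl
        rw [hz]
        ring
      · rw [if_neg hf]
    rw [Finset.sum_congr rfl fun f _ => hterm f]
    have hexp : ∑ f : Fin k → ZMod 2, D f * chi (f ⬝ᵥ u)
        = (a:ℤ) * ∑ f : Fin k → ZMod 2, chi (f ⬝ᵥ u)
          + ((b:ℤ)-a) * ∑ f : Fin k → ZMod 2, eps (f ⬝ᵥ p₀) * chi (f ⬝ᵥ u)
          + ((c:ℤ)-a) * ∑ f : Fin k → ZMod 2, eps (f ⬝ᵥ q₀) * chi (f ⬝ᵥ u) := by
      rw [Finset.mul_sum, Finset.mul_sum, Finset.mul_sum, ← Finset.sum_add_distrib,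
        ← Finset.sum_add_distrib]
      refine Finset.sum_congr rfl fun f _ => ?_
      show D f * chi (f ⬝ᵥ u) = _
      rw [hDdef]
      ring
    rw [hexp, sumW_chi (by omega) u hu, sumW_eps_chi hk p₀ u hp₀ hu, sumW_eps_chi hk q₀ u hq₀ hu]
    by_cases hup : u = p₀
    · subst hup
      rw [if_pos rfl, if_neg hpq₀, if_pos rfl]
      ring
    · by_cases huq : u = q₀
      · subst huq
        rw [if_neg hup, if_pos rfl, if_neg hup, if_pos rfl]
        ring
      · rw [if_neg hup, if_neg huq, if_neg hup, if_neg huq]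
        ring
  -- build the codes and the map
  have injU : Injective (EE mU) := EE_inj mU hmU1
  set eqU := LinearEquiv.ofInjective (EE mU) injU with heqU
  refine ⟨NN mU, NN mV, LinearMap.range (EE mU), LinearMap.range (EE mV),
    ((EE mV).rangeRestrict.comp eqU.symm.toLinearMap), ?_⟩
  set e2 : {w : Fin k → ZMod 2 // w ≠ 0} ≃ {v : ↥(LinearMap.range (EE mU)) // v ≠ 0} :=
    eqU.toEquiv.subtypeEquiv (fun w => not_congr (LinearEquiv.map_eq_zero_iff eqU).symm) with he2
  set B : Projectivization (ZMod 2) ↥(LinearMap.range (EE mU)) ≃ {w : Fin k → ZMod 2 // w ≠ 0} :=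
    projEquiv.trans e2.symm with hB
  set gg : {w : Fin k → ZMod 2 // w ≠ 0} → ℤ :=
    fun w => (hammingNorm (EE mU w.1) : ℤ) - (hammingNorm (EE mV w.1) : ℤ) with hggdef
  have hofinj : ∀ x : Fin k → ZMod 2,
      ((eqU x : ↥(LinearMap.range (EE mU))) : Fin (NN mU) → ZMod 2) = EE mU x := fun x => rfl
  have hpwc : projWeightChanges ((EE mV).rangeRestrict.comp eqU.symm.toLinearMap)
      = Multiset.map gg Finset.univ.val := by
    rw [← map_univ_equiv' B gg]
    unfold projWeightChanges
    apply Multiset.map_congr rfl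
    intro p _
    have hBg : gg (B p) = (hammingNorm (EE mU (eqU.symm p.rep)) : ℤ)
        - (hammingNorm (EE mV (eqU.symm p.rep)) : ℤ) := rfl
    have hrep : ((p.rep : ↥(LinearMap.range (EE mU))) : Fin (NN mU) → ZMod 2)
        = EE mU (eqU.symm p.rep) := by
      conv_lhs => rw [← LinearEquiv.apply_symm_apply eqU p.rep]
      rfl
    have hφv : ((((EE mV).rangeRestrict.comp eqU.symm.toLinearMap) p.rep :
        ↥(LinearMap.range (EE mV))) : Fin (NN mV) → ZMod 2) = EE mV (eqU.symm p.rep) := rfl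
    rw [hBg, ← hrep, ← hφv]
  rw [hpwc]
  have hne : (⟨p₀, hp₀⟩ : {w : Fin k → ZMod 2 // w ≠ 0}) ≠ ⟨q₀, hq₀⟩ :=
    fun h => hpq₀ (congrArg Subtype.val h)
  have hgp : gg ⟨p₀, hp₀⟩ = (b:ℤ) := by
    show (hammingNorm (EE mU p₀) : ℤ) - (hammingNorm (EE mV p₀) : ℤ) = (b:ℤ)
    rw [hval p₀ hp₀, if_pos rfl]
  have hgq : gg ⟨q₀, hq₀⟩ = (c:ℤ) := by
    show (hammingNorm (EE mU q₀) : ℤ) - (hammingNorm (EE mV q₀) : ℤ) = (c:ℤ)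
    rw [hval q₀ hq₀, if_neg (fun h => hpq₀ h.symm), if_pos rfl]
  have hga : ∀ r : {w : Fin k → ZMod 2 // w ≠ 0}, r ≠ ⟨p₀, hp₀⟩ → r ≠ ⟨q₀, hq₀⟩ → gg r = (a:ℤ) := by
    intro r h1 h2
    show (hammingNorm (EE mU r.1) : ℤ) - (hammingNorm (EE mV r.1) : ℤ) = (a:ℤ)
    rw [hval r.1 r.2, if_neg (fun h => h1 (Subtype.ext h)), if_neg (fun h => h2 (Subtype.ext h))]
  rw [ms_build gg hne hgp hgq hga]
  have hcardW' : Fintype.card {w : Fin k → ZMod 2 // w ≠ 0} = 2^k - 1 := by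
    rw [← Nat.card_eq_fintype_card]
    have t := Fintype.card_subtype_compl (fun w : Fin k → ZMod 2 => w = 0)
    rw [Fintype.card_subtype_eq (0 : Fin k → ZMod 2), cardW] at t
    rw [← Nat.card_eq_fintype_card] at t
    exact t
  rw [hcardW']
  have h4 : (4:ℕ) ≤ 2^k := by
    calc (4:ℕ) = 2^2 := by norm_num
      _ ≤ 2^k := Nat.pow_le_pow_right (by norm_num) hk
  rw [show (2:ℕ)^k - 1 - 2 = 2^k - 3 from by omega]

end Backward

/-- the multiset of `2^k - 3` copies of `a` and one copy each of `b`, `c` is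
realized by an F₂-linear map iff `2^(k-2)` divides `a`, `b`, `c` and exactly 1 or exactly 3
of `a`, `b`, `c` are divisible by `2^(k-1)`. -/
theorem stmt_9 (k a b c : ℕ) (hk : 2 ≤ k) :
    Realizes (ZMod 2) (Multiset.replicate (2 ^ k - 3) (a : ℤ) + {(b : ℤ), (c : ℤ)}) ↔
      ((2 ^ (k - 2) ∣ a ∧ 2 ^ (k - 2) ∣ b ∧ 2 ^ (k - 2) ∣ c) ∧
        ((2 ^ (k - 1) ∣ a ∧ 2 ^ (k - 1) ∣ b ∧ 2 ^ (k - 1) ∣ c) ∨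
         (2 ^ (k - 1) ∣ a ∧ ¬ 2 ^ (k - 1) ∣ b ∧ ¬ 2 ^ (k - 1) ∣ c) ∨
         (¬ 2 ^ (k - 1) ∣ a ∧ 2 ^ (k - 1) ∣ b ∧ ¬ 2 ^ (k - 1) ∣ c) ∨
         (¬ 2 ^ (k - 1) ∣ a ∧ ¬ 2 ^ (k - 1) ∣ b ∧ 2 ^ (k - 1) ∣ c))) := by
  constructor
  · intro h
    exact (arith_rhs_iff hk a b c).mpr (forward_main k a b c hk h)
  · intro h
    obtain ⟨da, db, dc, ds⟩ := (arith_rhs_iff hk a b c).mp h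
    exact backward_main k a b c hk da db dc ds
end

section
/- Let a, b, c be nonnegative integers and let k ≥ 3. Let S be the multiset consisting of 2^k − 3 copies of a and one copy each of b and c, and suppose S is realized by some F_2-linear map between binary linear codes. Then the following are equivalent: (1) S is 2-projection-forcing; (2) the set {a, b, c} satisfies the triangle inequality (a ≤ b + c, b ≤ a + c, c ≤ a + b) and 3a − b − c ≥ 0; (3) the four inequalities a < b + c + 2^{k−1}, b < a + c + 2^{k−1}, c < a + b + 2^{k−1}, and b + c < 3a + 2^{k−1} all hold. -/
open Matrix

set_option linter.unusedSectionVars false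
set_option linter.unusedVariables false

noncomputable section
namespace Stmt10Aux


open Finset Function

variable {F : Type} [Field F] [Fintype F] [DecidableEq F]

lemma two_cases (hF : Fintype.card F = 2) (x : F) : x = 0 ∨ x = 1 := by
  by_cases hx : x = 0
  · exact Or.inl hx
  · right
    have hcard : Fintype.card Fˣ = 1 := by
      rw [Fintype.card_units, hF]
    haveI : Subsingleton Fˣ := Fintype.card_le_one_iff_subsingleton.mp hcard.le
    have : Units.mk0 x hx = 1 := Subsingleton.elim _ _
    calc x = ((Units.mk0 x hx : Fˣ) : F) := rfl
    _ = ((1 : Fˣ) : F) := by rw [this]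
    _ = 1 := rfl

lemma units_eq_one (hF : Fintype.card F = 2) (u : Fˣ) : (u : F) = 1 :=
  (two_cases hF u).resolve_left u.ne_zero

lemma ne_zero_iff_eq_one (hF : Fintype.card F = 2) (x : F) : x ≠ 0 ↔ x = 1 :=
  ⟨fun h => (two_cases hF x).resolve_left h, fun h => h ▸ one_ne_zero⟩

variable {W : Type*} [AddCommGroup W] [Module F W] [Finite W]

lemma fiber_card {Y : Type*} [AddCommGroup Y] [Module F Y] [Finite Y]
    (Φ : W →ₗ[F] Y) (hs : Function.Surjective Φ) (y : Y) :
    Nat.card Y * Nat.card {u : W // Φ u = y} = Nat.card W := by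
  classical
  have hfib : ∀ y' : Y, Nat.card {u : W // Φ u = y'} = Nat.card {u : W // Φ u = y} := by
    intro y'
    obtain ⟨t, ht⟩ := hs (y - y')
    refine Nat.card_congr ⟨fun u => ⟨u.1 + t, by rw [map_add, u.2, ht]; abel⟩,
      fun u => ⟨u.1 - t, by rw [map_sub, u.2, ht]; abel⟩, fun u => by ext; simp,
      fun u => by ext; simp⟩
  haveI : Fintype W := Fintype.ofFinite W
  haveI : Fintype Y := Fintype.ofFinite Y
  have hW : Nat.card W = ∑ y' : Y, Nat.card {u : W // Φ u = y'} := by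
    rw [Nat.card_eq_fintype_card,
      ← Fintype.card_congr (Equiv.sigmaFiberEquiv (fun u : W => Φ u)), Fintype.card_sigma]
    simp [Nat.card_eq_fintype_card]
  rw [hW, Finset.sum_congr rfl (fun y' _ => hfib y'), Finset.sum_const, Finset.card_univ,
    smul_eq_mul, Nat.card_eq_fintype_card (α := Y)]

lemma count_one (hF : Fintype.card F = 2) (G : W →ₗ[F] F) (hG : G ≠ 0) :
    2 * Nat.card {u : W // G u ≠ 0} = Nat.card W := by
  obtain ⟨u₀, hu₀⟩ := DFunLike.ne_iff.mp hG
  have h1 : G u₀ = 1 := (ne_zero_iff_eq_one hF _).mp (by simpa using hu₀)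
  have hs : Function.Surjective G := fun y => ⟨y • u₀, by rw [_root_.map_smul, h1, smul_eq_mul, mul_one]⟩
  have := fiber_card G hs 1
  rw [Nat.card_eq_fintype_card (α := F), hF] at this
  rw [← this]
  congr 1
  exact Nat.card_congr (Equiv.subtypeEquivRight (fun u => ne_zero_iff_eq_one hF (G u)))

lemma imp_eq (hF : Fintype.card F = 2) {G H : W →ₗ[F] F} (hH : H ≠ 0)
    (himp : ∀ u, H u = 1 → G u = 1) : G = H := by
  obtain ⟨u₁, hu₁⟩ := DFunLike.ne_iff.mp hH
  have h1 : H u₁ = 1 := (ne_zero_iff_eq_one hF _).mp (by simpa using hu₁)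
  ext u
  rcases two_cases hF (H u) with h | h
  · rw [h]
    have hadd : H (u + u₁) = 1 := by rw [map_add, h, h1, zero_add]
    have := himp _ hadd
    rw [map_add, himp _ h1] at this
    linear_combination this
  · rw [h, himp _ h]

lemma count_two (hF : Fintype.card F = 2) {G H : W →ₗ[F] F} (hH : H ≠ 0) (hG : G ≠ 0)
    (hGH : G ≠ H) : 4 * Nat.card {u : W // H u ≠ 0 ∧ G u ≠ 0} = Nat.card W := by
  set Φ : W →ₗ[F] F × F := H.prod G with hΦ
  have h10 : ∃ u, H u = 1 ∧ G u = 0 := by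
    by_contra hno
    push_neg at hno
    exact hGH (imp_eq hF hH (fun u hu => (ne_zero_iff_eq_one hF _).mp (hno u hu)))
  have h01 : ∃ u, G u = 1 ∧ H u = 0 := by
    by_contra hno
    push_neg at hno
    exact hGH ((imp_eq hF hG (fun u hu => (ne_zero_iff_eq_one hF _).mp (hno u hu))).symm)
  obtain ⟨u10, hu10, hu10'⟩ := h10
  obtain ⟨u01, hu01, hu01'⟩ := h01
  have hs : Function.Surjective Φ := by
    rintro ⟨y, z⟩
    refine ⟨y • u10 + z • u01, ?_⟩
    simp only [hΦ, map_add, _root_.map_smul, LinearMap.prod_apply, Function.prod, Prod.smul_mk, Prod.mk_add_mk]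
    rw [hu10, hu10', hu01, hu01']
    simp [smul_eq_mul]
  have := fiber_card Φ hs (1, 1)
  rw [Nat.card_prod, Nat.card_eq_fintype_card (α := F), hF] at this
  rw [show (4 : ℕ) = 2 * 2 from rfl, ← this]
  congr 1
  refine Nat.card_congr (Equiv.subtypeEquivRight (fun u => ?_))
  rw [ne_zero_iff_eq_one hF, ne_zero_iff_eq_one hF]
  constructor
  · rintro ⟨h1, h2⟩; exact Prod.ext h1 h2
  · intro h
    exact ⟨congrArg Prod.fst h, congrArg Prod.snd h⟩




open Finset Function

variable {F : Type} [Field F] [Fintype F] [DecidableEq F]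



/-! ### Projectivization over a 2-element field -/

section Proj
variable {W : Type*} [AddCommGroup W] [Module F W]

lemma mk_inj (hF : Fintype.card F = 2) {v w : W} (hv : v ≠ 0) (hw : w ≠ 0)
    (h : Projectivization.mk F v hv = Projectivization.mk F w hw) : v = w := by
  obtain ⟨a, ha⟩ := (Projectivization.mk_eq_mk_iff F v w hv hw).1 h
  rw [← ha, Units.smul_def, units_eq_one hF a, one_smul]

lemma rep_mk (hF : Fintype.card F = 2) {v : W} (hv : v ≠ 0) :
    (Projectivization.mk F v hv).rep = v :=
  mk_inj hF (Projectivization.rep_nonzero _) hv (Projectivization.mk_rep _)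

/-- The equivalence between nonzero vectors and the projectivization, over `F` with `|F| = 2`. -/
def neEquiv (hF : Fintype.card F = 2) : {v : W // v ≠ 0} ≃ Projectivization F W :=
  Equiv.ofBijective (fun v => Projectivization.mk F v.1 v.2)
    ⟨fun v w h => Subtype.ext (mk_inj hF v.2 w.2 h),
     fun p => ⟨⟨p.rep, p.rep_nonzero⟩, p.mk_rep⟩⟩

lemma neEquiv_rep (hF : Fintype.card F = 2) (v : {v : W // v ≠ 0}) :
    (neEquiv hF v).rep = v.1 := rep_mk hF v.2

end Proj

/-! ### Separating functionals -/

section Sep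
variable {W : Type*} [AddCommGroup W] [Module F W]

lemma exists_sep (P : Submodule F W) {x : W} (hx : x ∉ P) :
    ∃ h : W →ₗ[F] F, h x ≠ 0 ∧ ∀ y ∈ P, h y = 0 := by
  have hπ : P.mkQ x ≠ 0 := by
    rw [Submodule.mkQ_apply, ne_eq, Submodule.Quotient.mk_eq_zero]
    exact hx
  have : ¬ ∀ f : Module.Dual F (W ⧸ P), f (P.mkQ x) = 0 := by
    rw [Module.forall_dual_apply_eq_zero_iff]
    exact hπ
  push_neg at this
  obtain ⟨f, hf⟩ := this
  refine ⟨f.comp P.mkQ, hf, fun y hy => ?_⟩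
  simp only [LinearMap.comp_apply, Submodule.mkQ_apply]
  rw [(Submodule.Quotient.mk_eq_zero P).2 hy, map_zero]

lemma exists_funcs [Finite W] (hF : Fintype.card F = 2) (hcard : 4 < Nat.card W)
    {p q : W} (hp : p ≠ 0) (hq : q ≠ 0) (hpq : p ≠ q) :
    ∃ h00 hb hc hbc : W →ₗ[F] F,
      (h00 ≠ 0 ∧ h00 p = 0 ∧ h00 q = 0) ∧
      (hb p ≠ 0 ∧ hb q = 0) ∧ (hc p = 0 ∧ hc q ≠ 0) ∧ (hbc p ≠ 0 ∧ hbc q ≠ 0) := by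
  have hpq' : p ∉ Submodule.span F {q} := by
    rw [Submodule.mem_span_singleton]
    rintro ⟨t, rfl⟩
    rcases two_cases hF t with rfl | rfl
    · exact hp (zero_smul F q)
    · exact hpq (one_smul F q)
  have hqp' : q ∉ Submodule.span F {p} := by
    rw [Submodule.mem_span_singleton]
    rintro ⟨t, rfl⟩
    rcases two_cases hF t with rfl | rfl
    · exact hq (zero_smul F p)
    · exact hpq (one_smul F p).symm
  obtain ⟨hb, hbp, hbq⟩ := exists_sep (Submodule.span F {q}) hpq'
  obtain ⟨hc, hcq, hcp⟩ := exists_sep (Submodule.span F {p}) hqp'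
  have hbq0 : hb q = 0 := hbq q (Submodule.mem_span_singleton_self q)
  have hcp0 : hc p = 0 := hcp p (Submodule.mem_span_singleton_self p)
  have hr : ∃ r : W, r ∉ Submodule.span F {p, q} := by
    by_contra hno
    push_neg at hno
    have hsurj : Function.Surjective (fun yz : F × F => yz.1 • p + yz.2 • q) := by
      intro r
      obtain ⟨y, z, hyz⟩ := Submodule.mem_span_pair.1 (hno r)
      exact ⟨(y, z), hyz⟩
    have := Nat.card_le_card_of_surjective _ hsurj
    rw [Nat.card_prod, Nat.card_eq_fintype_card (α := F), hF] at this
    omega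
  obtain ⟨r, hr⟩ := hr
  obtain ⟨h00, h00r, h00pq⟩ := exists_sep _ hr
  refine ⟨h00, hb, hc, hb + hc,
    ⟨fun h0 => h00r (by rw [h0]; rfl),
     h00pq p (Submodule.subset_span (by simp)),
     h00pq q (Submodule.subset_span (by simp))⟩,
    ⟨hbp, hbq0⟩, ⟨hcp0, hcq⟩, ?_, ?_⟩
  · rw [LinearMap.add_apply, hcp0, add_zero]; exact hbp
  · rw [LinearMap.add_apply, hbq0, zero_add]; exact hcq

end Sep

/-! ### Coordinate functionals -/

section Coord
variable {n m : ℕ} {U : Submodule F (Fin n → F)} {V : Submodule F (Fin m → F)}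

/-- The `j`-th coordinate functional on the domain code. -/
def domFn (U : Submodule F (Fin n → F)) (j : Fin n) : U →ₗ[F] F :=
  (LinearMap.proj j).comp U.subtype

/-- The `i`-th coordinate functional of the composite map. -/
def codFn (φ : U →ₗ[F] V) (i : Fin m) : U →ₗ[F] F :=
  (LinearMap.proj i).comp (V.subtype.comp φ)

@[simp] lemma domFn_apply (j : Fin n) (u : U) : domFn U j u = (u : Fin n → F) j := rfl

@[simp] lemma codFn_apply (φ : U →ₗ[F] V) (i : Fin m) (u : U) :
    codFn φ i u = ((φ u : V) : Fin m → F) i := rfl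

/-- Number of domain coordinates whose functional is `h`. -/
def dct (U : Submodule F (Fin n → F)) (h : U →ₗ[F] F) : ℕ :=
  Nat.card {j : Fin n // domFn U j = h}

/-- Number of codomain coordinates whose composite functional is `h`. -/
def ect (φ : U →ₗ[F] V) (h : U →ₗ[F] F) : ℕ :=
  Nat.card {i : Fin m // codFn φ i = h}

lemma proj_of_nonneg (hF : Fintype.card F = 2) (φ : U →ₗ[F] V)
    (hle : ∀ h : U →ₗ[F] F, h ≠ 0 → ect φ h ≤ dct U h) : IsProjection φ := by
  classical
  by_cases hall : ∀ i : Fin m, codFn φ i = 0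
  · refine ⟨0, fun u => ?_, by simp, by simp⟩
    rw [Matrix.zero_mulVec]
    ext i
    have := congrArg (fun g : U →ₗ[F] F => g u) (hall i)
    simpa using this
  · push_neg at hall
    obtain ⟨i₀, hi₀⟩ := hall
    haveI : Nonempty (Fin n) := by
      haveI : Nonempty {i : Fin m // codFn φ i = codFn φ i₀} := ⟨⟨i₀, rfl⟩⟩
      have h1 : 0 < ect φ (codFn φ i₀) := Nat.card_pos
      have h2 : 0 < dct U (codFn φ i₀) := lt_of_lt_of_le h1 (hle _ hi₀)
      have h3 : Nonempty {j : Fin n // domFn U j = codFn φ i₀} := (Nat.card_pos_iff.mp h2).1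
      exact ⟨h3.some.1⟩
    have hemb : ∀ h : U →ₗ[F] F, ∃ g : Fin m → Fin n,
        h ≠ 0 → (∀ i, codFn φ i = h → domFn U (g i) = h) ∧
          Set.InjOn g {i | codFn φ i = h} := by
      intro h
      by_cases hh : h ≠ 0
      · have hcard : Fintype.card {i : Fin m // codFn φ i = h} ≤
            Fintype.card {j : Fin n // domFn U j = h} := by
          rw [← Nat.card_eq_fintype_card, ← Nat.card_eq_fintype_card]
          exact hle h hh
        obtain ⟨e0⟩ := Function.Embedding.nonempty_of_card_le hcard
        refine ⟨fun i => if hi : codFn φ i = h then (e0 ⟨i, hi⟩).1 else Classical.arbitrary _,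
          fun _ => ⟨fun i hi => ?_, fun i hi i' hi' hgg => ?_⟩⟩
        · simp only [dif_pos hi]
          exact (e0 ⟨i, hi⟩).2
        · simp only [Set.mem_setOf_eq] at hi hi'
          simp only [dif_pos hi, dif_pos hi'] at hgg
          have := e0.injective (Subtype.ext hgg)
          exact congrArg Subtype.val this
      · exact ⟨fun _ => Classical.arbitrary _, fun h' => absurd h' (by simpa using hh)⟩
    choose g hg using hemb
    have hJ1 : ∀ i : Fin m, codFn φ i ≠ 0 → domFn U (g (codFn φ i) i) = codFn φ i := fun i hi =>
      (hg (codFn φ i) hi).1 i rfl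
    refine ⟨fun i j => if codFn φ i ≠ 0 ∧ j = g (codFn φ i) i then 1 else 0, fun u => ?_, ?_, ?_⟩
    · ext i
      simp only [Matrix.mulVec]
      by_cases hi : codFn φ i = 0
      · simp only [dotProduct, hi, ne_eq, not_true_eq_false, false_and, if_false,
          zero_mul, Finset.sum_const_zero]
        have := congrArg (fun g : U →ₗ[F] F => g u) hi
        simpa using this
      · have hsimp : ∀ j, (if codFn φ i ≠ 0 ∧ j = g (codFn φ i) i then (1:F) else 0) =
            (if j = g (codFn φ i) i then (1:F) else 0) := by
          intro j; simp [hi]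
        simp only [dotProduct, hsimp, ite_mul, one_mul, zero_mul]
        rw [Finset.sum_ite_eq' Finset.univ (g (codFn φ i) i) (fun j => (u : Fin n → F) j),
          if_pos (Finset.mem_univ _)]
        have h2 := congrArg (fun g : U →ₗ[F] F => g u) (hJ1 i hi)
        simpa using h2.symm
    · intro i j j' h1 h2
      have hc1 : codFn φ i ≠ 0 ∧ j = g (codFn φ i) i := by
        by_contra hc; exact h1 (if_neg hc)
      have hc2 : codFn φ i ≠ 0 ∧ j' = g (codFn φ i) i := by
        by_contra hc; exact h2 (if_neg hc)
      rw [hc1.2, hc2.2]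
    · intro i i' j h1 h2
      have hc1 : codFn φ i ≠ 0 ∧ j = g (codFn φ i) i := by
        by_contra hc; exact h1 (if_neg hc)
      have hc2 : codFn φ i' ≠ 0 ∧ j = g (codFn φ i') i' := by
        by_contra hc; exact h2 (if_neg hc)
      obtain ⟨hi, hji⟩ := hc1
      obtain ⟨hi', hji'⟩ := hc2
      have hsame : codFn φ i = codFn φ i' := by
        rw [← hJ1 i hi, ← hJ1 i' hi', ← hji, ← hji']
      have hgi : g (codFn φ i) i = g (codFn φ i) i' := by
        rw [← hji, hsame, ← hji']
      exact (hg (codFn φ i) hi).2 (show codFn φ i = codFn φ i from rfl)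
        (show codFn φ i' = codFn φ i from hsame.symm) hgi

lemma nonneg_of_proj (hF : Fintype.card F = 2) (φ : U →ₗ[F] V)
    (hproj : IsProjection φ) : ∀ h : U →ₗ[F] F, h ≠ 0 → ect φ h ≤ dct U h := by
  classical
  intro h hh
  obtain ⟨M, hM, hrow, hcol⟩ := hproj
  have hφi : ∀ (i : Fin m) (u : U), codFn φ i u = ∑ j, M i j * (u : Fin n → F) j := by
    intro i u
    have := congrFun (hM u) i
    simpa [Matrix.mulVec, dotProduct] using this
  rw [ect, dct, Nat.card_eq_fintype_card, Nat.card_eq_fintype_card,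
    Fintype.card_subtype, Fintype.card_subtype]
  rcases Finset.eq_empty_or_nonempty (Finset.univ.filter (fun i : Fin m => codFn φ i = h)) with
    he | ⟨i₀, hi₀⟩
  · rw [he]; simp
  · have hJex : ∀ i : Fin m, codFn φ i = h → ∃ j, M i j ≠ 0 := by
      intro i hi
      by_contra hno
      push_neg at hno
      apply hh
      rw [← hi]
      ext u
      rw [hφi i u]
      simp [hno]
    haveI : Nonempty (Fin n) := by
      rw [Finset.mem_filter] at hi₀
      obtain ⟨j, -⟩ := hJex i₀ hi₀.2
      exact ⟨j⟩
    have hJex' : ∀ i : Fin m, ∃ j : Fin n, (∃ j', M i j' ≠ 0) → M i j ≠ 0 := by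
      intro i
      by_cases hi : ∃ j', M i j' ≠ 0
      · obtain ⟨j, hj⟩ := hi
        exact ⟨j, fun _ => hj⟩
      · exact ⟨Classical.arbitrary _, fun h' => absurd h' hi⟩
    choose f hfM using hJex'
    apply Finset.card_le_card_of_injOn f
    · intro i hi
      rw [Finset.mem_coe, Finset.mem_filter] at hi ⊢
      refine ⟨Finset.mem_univ _, ?_⟩
      have hMi : M i (f i) ≠ 0 := hfM i (hJex i hi.2)
      have hrow' : ∀ j, j ≠ f i → M i j = 0 := by
        intro j hj
        by_contra hj0
        exact hj (hrow i j (f i) hj0 hMi)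
      ext u
      rw [domFn_apply, ← hi.2, hφi i u]
      rw [Finset.sum_eq_single (f i) (fun j _ hj => by rw [hrow' j hj, zero_mul])
        (fun hmem => absurd (Finset.mem_univ _) hmem)]
      rw [(ne_zero_iff_eq_one hF _).1 hMi, one_mul]
    · intro i hi i' hi' hff
      simp only [Finset.coe_filter, Set.mem_setOf_eq, Finset.mem_univ, true_and] at hi hi'
      exact hcol i i' (f i) (hfM i (hJex i hi)) (by rw [hff]; exact hfM i' (hJex i' hi'))

end Coord

/-! ### The core diamond identity -/

section Core
variable {n m : ℕ} {U : Submodule F (Fin n → F)} {V : Submodule F (Fin m → F)}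

set_option maxHeartbeats 2000000 in
lemma core (hF : Fintype.card F = 2) {k a b c : ℕ} (hk : 3 ≤ k) (φ : U →ₗ[F] V)
    (hφ : projWeightChanges φ =
      Multiset.replicate (2 ^ k - 3) (a : ℤ) + {(b : ℤ), (c : ℤ)}) :
    ∃ p q : U, p ≠ 0 ∧ q ≠ 0 ∧ p ≠ q ∧ Nat.card U = 2 ^ k ∧
      ∀ h : U →ₗ[F] F, h ≠ 0 →
        (2 : ℤ) ^ (k - 1) * ((dct U h : ℤ) - (ect φ h : ℤ)) =
          (3 * (a : ℤ) - b - c) + 2 * ((b : ℤ) - a) * (if h p ≠ 0 then 1 else 0)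
            + 2 * ((c : ℤ) - a) * (if h q ≠ 0 then 1 else 0) := by
  classical
  obtain ⟨j0, rfl⟩ : ∃ j0, k = j0 + 3 := ⟨k - 3, by omega⟩
  haveI : Fintype U := Fintype.ofFinite U
  haveI : Fintype {u : U // u ≠ 0} := Fintype.ofFinite _
  set δ : U → ℤ := fun u => (hammingNorm ((u : Fin n → F)) : ℤ) -
    (hammingNorm ((φ u : V) : Fin m → F) : ℤ) with hδdef
  -- transfer the multiset to nonzero vectors
  have hmap : (Finset.univ : Finset {u : U // u ≠ 0}).val.map (fun u => δ u.1)
      = Multiset.replicate (2 ^ (j0 + 3) - 3) (a : ℤ) + {(b : ℤ), (c : ℤ)} := by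
    rw [← hφ]
    unfold projWeightChanges
    conv_rhs => rw [← Finset.map_univ_equiv (neEquiv hF (W := U))]
    rw [Finset.map_val, Multiset.map_map]
    exact (Multiset.map_congr rfl (fun x _ => by
      simp [Function.comp, neEquiv_rep hF, hδdef])).symm
  have h8 : (8 : ℕ) ≤ 2 ^ (j0 + 3) := by
    calc (8 : ℕ) = 2 ^ 3 := by norm_num
    _ ≤ 2 ^ (j0 + 3) := Nat.pow_le_pow_right (by norm_num) (by omega)
  -- cardinality of U
  have hcT : Fintype.card {u : U // u ≠ 0} = 2 ^ (j0 + 3) - 1 := by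
    have hc := congrArg Multiset.card hmap
    simp only [Multiset.card_map, Finset.card_val, Finset.card_univ, Multiset.card_add,
      Multiset.card_replicate, Multiset.insert_eq_cons, Multiset.card_cons,
      Multiset.card_singleton] at hc
    omega
  have hcU' : Nat.card U = 2 ^ (j0 + 3) := by
    have e1 : Nat.card U = Nat.card {u : U // u ≠ 0} + 1 := by
      rw [← Nat.card_congr (Equiv.optionSubtypeNe (0 : U))]
      rw [Nat.card_eq_fintype_card, Nat.card_eq_fintype_card, Fintype.card_option]
    rw [e1, Nat.card_eq_fintype_card, hcT]
    omega
  have hcU : Fintype.card U = 2 ^ (j0 + 3) := by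
    rw [← Nat.card_eq_fintype_card]; exact hcU'
  -- extract the two special points
  have hS' : (Finset.univ : Finset {u : U // u ≠ 0}).val.map (fun u => δ u.1)
      = (b : ℤ) ::ₘ (c : ℤ) ::ₘ Multiset.replicate (2 ^ (j0 + 3) - 3) (a : ℤ) := by
    rw [hmap, Multiset.insert_eq_cons, ← Multiset.cons_zero (c : ℤ), Multiset.add_cons,
      Multiset.add_cons, add_zero]
  obtain ⟨pT, hpT, hdpb⟩ : ∃ x ∈ (Finset.univ : Finset {u : U // u ≠ 0}).val, δ x.1 = b := by
    have hb : (b : ℤ) ∈ (Finset.univ : Finset {u : U // u ≠ 0}).val.map (fun u => δ u.1) := by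
      rw [hS']; exact Multiset.mem_cons_self _ _
    exact Multiset.mem_map.1 hb
  have hnodup : ((Finset.univ : Finset {u : U // u ≠ 0}).val).Nodup :=
    (Finset.univ : Finset {u : U // u ≠ 0}).nodup
  have hS2 : (((Finset.univ : Finset {u : U // u ≠ 0}).val).erase pT).map (fun u => δ u.1)
      = (c : ℤ) ::ₘ Multiset.replicate (2 ^ (j0 + 3) - 3) (a : ℤ) := by
    have h1 := hS'
    rw [← Multiset.cons_erase hpT, Multiset.map_cons, hdpb] at h1
    exact (Multiset.cons_inj_right _).1 h1
  obtain ⟨qT, hqT, hdqc⟩ :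
      ∃ x ∈ ((Finset.univ : Finset {u : U // u ≠ 0}).val).erase pT, δ x.1 = c := by
    have hc : (c : ℤ) ∈ (((Finset.univ : Finset {u : U // u ≠ 0}).val).erase pT).map
        (fun u => δ u.1) := by
      rw [hS2]; exact Multiset.mem_cons_self _ _
    exact Multiset.mem_map.1 hc
  have hqTne : qT ≠ pT := (hnodup.mem_erase_iff.1 hqT).1
  have hS3 : ((((Finset.univ : Finset {u : U // u ≠ 0}).val).erase pT).erase qT).map
      (fun u => δ u.1) = Multiset.replicate (2 ^ (j0 + 3) - 3) (a : ℤ) := by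
    have h1 := hS2
    rw [← Multiset.cons_erase hqT, Multiset.map_cons, hdqc] at h1
    exact (Multiset.cons_inj_right _).1 h1
  have hδa : ∀ u : U, u ≠ 0 → u ≠ pT.1 → u ≠ qT.1 → δ u = a := by
    intro u hu hup huq
    have hmem : (⟨u, hu⟩ : {u : U // u ≠ 0}) ∈
        (((Finset.univ : Finset {u : U // u ≠ 0}).val).erase pT).erase qT := by
      rw [(hnodup.erase pT).mem_erase_iff, hnodup.mem_erase_iff]
      exact ⟨fun e => huq (congrArg Subtype.val e), fun e => hup (congrArg Subtype.val e),
        Finset.mem_univ _⟩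
    have : δ u ∈ Multiset.replicate (2 ^ (j0 + 3) - 3) (a : ℤ) :=
      hS3 ▸ Multiset.mem_map_of_mem _ hmem
    exact Multiset.eq_of_mem_replicate this
  -- the counting key
  have key : ∀ h ℓ : U →ₗ[F] F, h ≠ 0 →
      (∑ u ∈ Finset.univ.filter (fun u : U => h u ≠ 0), (if ℓ u ≠ 0 then (1 : ℤ) else 0))
        = 2 ^ (j0 + 1) * ((if ℓ ≠ 0 then (1 : ℤ) else 0) + (if ℓ = h then (1 : ℤ) else 0)) := by
    intro h ℓ hh
    rw [Finset.sum_boole, Finset.filter_filter]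
    have hcard : ((Finset.univ.filter (fun u : U => h u ≠ 0 ∧ ℓ u ≠ 0)).card)
        = Nat.card {u : U // h u ≠ 0 ∧ ℓ u ≠ 0} := by
      rw [Nat.card_eq_fintype_card, Fintype.card_subtype]
    by_cases hℓ0 : ℓ = 0
    · subst hℓ0
      rw [if_neg (by simp), if_neg (fun e => hh e.symm)]
      simp
    · by_cases hℓh : ℓ = h
      · subst hℓh
        have hc1 : 2 * Nat.card {u : U // ℓ u ≠ 0} = 2 ^ (j0 + 3) := by
          rw [count_one hF ℓ hℓ0, hcU']
        have hc2 : Nat.card {u : U // ℓ u ≠ 0 ∧ ℓ u ≠ 0} = Nat.card {u : U // ℓ u ≠ 0} :=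
          Nat.card_congr (Equiv.subtypeEquivRight (fun u => and_self_iff))
        have hval : Nat.card {u : U // ℓ u ≠ 0} = 2 ^ (j0 + 2) := by
          have : (2 : ℕ) ^ (j0 + 3) = 2 * 2 ^ (j0 + 2) := by ring
          omega
        rw [hcard, hc2, hval, if_pos hℓ0, if_pos rfl]
        push_cast
        ring
      · have hc1 : 4 * Nat.card {u : U // h u ≠ 0 ∧ ℓ u ≠ 0} = 2 ^ (j0 + 3) := by
          rw [count_two hF hh hℓ0 hℓh, hcU']
        have hval : Nat.card {u : U // h u ≠ 0 ∧ ℓ u ≠ 0} = 2 ^ (j0 + 1) := by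
          have : (2 : ℕ) ^ (j0 + 3) = 4 * 2 ^ (j0 + 1) := by ring
          omega
        rw [hcard, hval, if_pos hℓ0, if_neg hℓh]
        push_cast
        ring
  have key0 : ∀ ℓ : U →ₗ[F] F,
      (∑ u : U, (if ℓ u ≠ 0 then (1 : ℤ) else 0))
        = 2 ^ (j0 + 2) * (if ℓ ≠ 0 then (1 : ℤ) else 0) := by
    intro ℓ
    rw [Finset.sum_boole]
    by_cases hℓ0 : ℓ = 0
    · subst hℓ0; simp
    · have hcard : ((Finset.univ.filter (fun u : U => ℓ u ≠ 0)).card)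
          = Nat.card {u : U // ℓ u ≠ 0} := by
        rw [Nat.card_eq_fintype_card, Fintype.card_subtype]
      have hc1 : 2 * Nat.card {u : U // ℓ u ≠ 0} = 2 ^ (j0 + 3) := by
        rw [count_one hF ℓ hℓ0, hcU']
      have hval : Nat.card {u : U // ℓ u ≠ 0} = 2 ^ (j0 + 2) := by
        have : (2 : ℕ) ^ (j0 + 3) = 2 * 2 ^ (j0 + 2) := by ring
        omega
      rw [hcard, hval, if_pos hℓ0, mul_one]
      push_cast
      ring
  -- hamming norms as indicator sums
  have hwdom : ∀ u : U, (hammingNorm ((u : Fin n → F)) : ℤ)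
      = ∑ j, (if domFn U j u ≠ 0 then (1 : ℤ) else 0) := by
    intro u
    rw [Finset.sum_boole]
    rfl
  have hwcod : ∀ u : U, (hammingNorm ((φ u : V) : Fin m → F) : ℤ)
      = ∑ i, (if codFn φ i u ≠ 0 then (1 : ℤ) else 0) := by
    intro u
    rw [Finset.sum_boole]
    rfl
  set Dd : ℤ := ∑ j, (if domFn U j ≠ 0 then (1 : ℤ) else 0) with hDd
  set Ee : ℤ := ∑ i, (if codFn φ i ≠ 0 then (1 : ℤ) else 0) with hEe
  -- main sum evaluations
  have E1 : ∀ h : U →ₗ[F] F, h ≠ 0 →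
      (∑ u ∈ Finset.univ.filter (fun u : U => h u ≠ 0), δ u)
        = 2 ^ (j0 + 1) * ((Dd + ∑ j, (if domFn U j = h then (1 : ℤ) else 0))
          - (Ee + ∑ i, (if codFn φ i = h then (1 : ℤ) else 0))) := by
    intro h hh
    have hd : (∑ u ∈ Finset.univ.filter (fun u : U => h u ≠ 0),
        (hammingNorm ((u : Fin n → F)) : ℤ))
        = ∑ j, 2 ^ (j0 + 1) * ((if domFn U j ≠ 0 then (1 : ℤ) else 0)
            + (if domFn U j = h then (1 : ℤ) else 0)) := by
      rw [Finset.sum_congr rfl (fun u _ => hwdom u), Finset.sum_comm]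
      exact Finset.sum_congr rfl (fun j _ => key h (domFn U j) hh)
    have hcdm : (∑ u ∈ Finset.univ.filter (fun u : U => h u ≠ 0),
        (hammingNorm ((φ u : V) : Fin m → F) : ℤ))
        = ∑ i, 2 ^ (j0 + 1) * ((if codFn φ i ≠ 0 then (1 : ℤ) else 0)
            + (if codFn φ i = h then (1 : ℤ) else 0)) := by
      rw [Finset.sum_congr rfl (fun u _ => hwcod u), Finset.sum_comm]
      exact Finset.sum_congr rfl (fun i _ => key h (codFn φ i) hh)
    calc (∑ u ∈ Finset.univ.filter (fun u : U => h u ≠ 0), δ u)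
        = (∑ u ∈ Finset.univ.filter (fun u : U => h u ≠ 0),
            (hammingNorm ((u : Fin n → F)) : ℤ))
          - (∑ u ∈ Finset.univ.filter (fun u : U => h u ≠ 0),
            (hammingNorm ((φ u : V) : Fin m → F) : ℤ)) := by
          rw [← Finset.sum_sub_distrib]
      _ = _ := by
          rw [hd, hcdm, ← Finset.mul_sum, ← Finset.mul_sum, Finset.sum_add_distrib,
            Finset.sum_add_distrib]
          ring
  have E2 : (∑ u : U, δ u) = 2 ^ (j0 + 2) * (Dd - Ee) := by
    calc (∑ u : U, δ u)
        = (∑ u : U, (hammingNorm ((u : Fin n → F)) : ℤ))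
          - (∑ u : U, (hammingNorm ((φ u : V) : Fin m → F) : ℤ)) := by
          rw [← Finset.sum_sub_distrib]
    _ = 2 ^ (j0 + 2) * (Dd - Ee) := by
        rw [Finset.sum_congr rfl (fun u _ => hwdom u), Finset.sum_comm,
          Finset.sum_congr rfl (fun u _ => hwcod u), Finset.sum_comm (γ := U)]
        rw [Finset.sum_congr rfl (fun j _ => key0 (domFn U j)),
          Finset.sum_congr rfl (fun i _ => key0 (codFn φ i))]
        rw [← Finset.mul_sum, ← Finset.mul_sum]
        ring
  have hδ0 : δ (0 : U) = 0 := by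
    have h0 : ((0 : U) : Fin n → F) = 0 := rfl
    have h0' : ((φ 0 : V) : Fin m → F) = 0 := by rw [map_zero]; rfl
    rw [hδdef]
    simp only [h0, h0', hammingNorm_zero]
    ring
  have E3 : (∑ u : U, δ u) = ((2 : ℤ) ^ (j0 + 3) - 3) * a + b + c := by
    have hsplit : (∑ u : U, δ u)
        = ∑ u : {u : U // u ≠ 0}, δ u.1 := by
      rw [← Finset.sum_subtype (Finset.univ.filter (fun u : U => u ≠ 0))
        (by simp) (fun u => δ u)]
      rw [Finset.sum_filter]
      apply Finset.sum_congr rfl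
      intro u _
      by_cases hu : u = 0
      · rw [if_neg (by simpa using hu), hu, hδ0]
      · rw [if_pos hu]
    rw [hsplit]
    have : (∑ u : {u : U // u ≠ 0}, δ u.1)
        = ((Finset.univ : Finset {u : U // u ≠ 0}).val.map (fun u => δ u.1)).sum := rfl
    rw [this, hS', Multiset.sum_cons, Multiset.sum_cons, Multiset.sum_replicate]
    have h3 : ((2 ^ (j0 + 3) - 3 : ℕ) : ℤ) = (2 : ℤ) ^ (j0 + 3) - 3 := by
      push_cast [Nat.cast_sub (by omega : 3 ≤ 2 ^ (j0 + 3))]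
      ring
    rw [nsmul_eq_mul, h3]
    ring
  have hcFh : ∀ h : U →ₗ[F] F, h ≠ 0 →
      ((Finset.univ.filter (fun u : U => h u ≠ 0)).card : ℤ) = 2 ^ (j0 + 2) := by
    intro h hh
    have hcard : ((Finset.univ.filter (fun u : U => h u ≠ 0)).card)
        = Nat.card {u : U // h u ≠ 0} := by
      rw [Nat.card_eq_fintype_card, Fintype.card_subtype]
    have hc1 : 2 * Nat.card {u : U // h u ≠ 0} = 2 ^ (j0 + 3) := by
      rw [count_one hF h hh, hcU']
    have hval : Nat.card {u : U // h u ≠ 0} = 2 ^ (j0 + 2) := by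
      have : (2 : ℕ) ^ (j0 + 3) = 2 * 2 ^ (j0 + 2) := by ring
      omega
    rw [hcard, hval]
    push_cast
    ring
  have E4 : ∀ h : U →ₗ[F] F, h ≠ 0 →
      (∑ u ∈ Finset.univ.filter (fun u : U => h u ≠ 0), δ u)
        = 2 ^ (j0 + 2) * (a : ℤ) + ((b : ℤ) - a) * (if h pT.1 ≠ 0 then 1 else 0)
          + ((c : ℤ) - a) * (if h qT.1 ≠ 0 then 1 else 0) := by
    intro h hh
    have hrw : ∀ u ∈ Finset.univ.filter (fun u : U => h u ≠ 0),
        δ u = (a : ℤ) + ((if u = pT.1 then ((b : ℤ) - a) else 0)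
          + (if u = qT.1 then ((c : ℤ) - a) else 0)) := by
      intro u hu
      have hu0 : u ≠ 0 := by
        intro h0
        rw [Finset.mem_filter] at hu
        exact hu.2 (by rw [h0, map_zero])
      by_cases hup : u = pT.1
      · have hnq : u ≠ qT.1 := by
          rw [hup]
          exact fun e => hqTne (Subtype.ext e.symm)
        rw [if_pos hup, if_neg hnq, hup, hdpb]
        ring
      · by_cases huq : u = qT.1
        · rw [if_neg hup, if_pos huq, huq, hdqc]
          ring
        · rw [if_neg hup, if_neg huq, hδa u hu0 hup huq]
          ring
    rw [Finset.sum_congr rfl hrw, Finset.sum_add_distrib, Finset.sum_add_distrib,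
      Finset.sum_const, Finset.sum_ite_eq' _ pT.1 (fun _ => (b : ℤ) - a),
      Finset.sum_ite_eq' _ qT.1 (fun _ => (c : ℤ) - a)]
    have hmemp : (pT.1 ∈ Finset.univ.filter (fun u : U => h u ≠ 0)) ↔ (h pT.1 ≠ 0) := by
      simp
    have hmemq : (qT.1 ∈ Finset.univ.filter (fun u : U => h u ≠ 0)) ↔ (h qT.1 ≠ 0) := by
      simp
    rw [nsmul_eq_mul, hcFh h hh]
    by_cases hhp : h pT.1 ≠ 0 <;> by_cases hhq : h qT.1 ≠ 0
    · rw [if_pos (hmemp.2 hhp), if_pos (hmemq.2 hhq), if_pos hhp, if_pos hhq]; ring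
    · rw [if_pos (hmemp.2 hhp), if_neg (fun e => hhq (hmemq.1 e)), if_pos hhp, if_neg hhq]; ring
    · rw [if_neg (fun e => hhp (hmemp.1 e)), if_pos (hmemq.2 hhq), if_neg hhp, if_pos hhq]; ring
    · rw [if_neg (fun e => hhp (hmemp.1 e)), if_neg (fun e => hhq (hmemq.1 e)),
        if_neg hhp, if_neg hhq]; ring
  -- conclusion
  refine ⟨pT.1, qT.1, pT.2, qT.2, fun e => hqTne (Subtype.ext e.symm), hcU', ?_⟩
  intro h hh
  have hdd : (dct U h : ℤ) = ∑ j, (if domFn U j = h then (1 : ℤ) else 0) := by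
    rw [Finset.sum_boole, dct, Nat.card_eq_fintype_card, Fintype.card_subtype]
  have hee : (ect φ h : ℤ) = ∑ i, (if codFn φ i = h then (1 : ℤ) else 0) := by
    rw [Finset.sum_boole, ect, Nat.card_eq_fintype_card, Fintype.card_subtype]
  have hE1 := E1 h hh
  have hE4 := E4 h hh
  have hexp : (j0 + 3 - 1) = j0 + 2 := rfl
  rw [hexp, hdd, hee]
  have hgoal : (2 : ℤ) ^ (j0 + 1) * ((Dd + ∑ j, (if domFn U j = h then (1 : ℤ) else 0))
      - (Ee + ∑ i, (if codFn φ i = h then (1 : ℤ) else 0)))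
      = 2 ^ (j0 + 2) * (a : ℤ) + ((b : ℤ) - a) * (if h pT.1 ≠ 0 then 1 else 0)
        + ((c : ℤ) - a) * (if h qT.1 ≠ 0 then 1 else 0) := by
    rw [← hE1, hE4]
  have hgoal2 : (2 : ℤ) ^ (j0 + 2) * (Dd - Ee) = ((2 : ℤ) ^ (j0 + 3) - 3) * a + b + c := by
    rw [← E2, E3]
  linear_combination 2 * hgoal - hgoal2
end Core

lemma nonneg_of_dvd_gt {N x : ℤ} (hN : 0 < N) (hdvd : N ∣ x) (hx : -N < x) : 0 ≤ x := by
  obtain ⟨t, rfl⟩ := hdvd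
  rcases le_or_gt 0 t with h | h
  · exact mul_nonneg hN.le h
  · exfalso
    have ht : t ≤ -1 := by omega
    nlinarith


end Stmt10Aux
end

open Stmt10Aux in
set_option maxHeartbeats 1000000 in
/-- for `S` consisting of `2^k - 3` copies of `a` and one copy each of `b`, `c`
(`k ≥ 3`), realized by some F₂-linear map, TFAE: (1) S is 2-projection-forcing;
(2) {a,b,c} satisfies the triangle inequality and `3a - b - c ≥ 0`;
(3) `a < b + c + 2^(k-1)`, `b < a + c + 2^(k-1)`, `c < a + b + 2^(k-1)`,
`b + c < 3a + 2^(k-1)`. -/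
theorem stmt_10 (k a b c : ℕ) (hk : 3 ≤ k)
    (hreal : Realizes (ZMod 2) (Multiset.replicate (2 ^ k - 3) (a : ℤ) + {(b : ℤ), (c : ℤ)})) :
    (ProjectionForcing 2 (Multiset.replicate (2 ^ k - 3) (a : ℤ) + {(b : ℤ), (c : ℤ)}) ↔
        (a ≤ b + c ∧ b ≤ a + c ∧ c ≤ a + b ∧ b + c ≤ 3 * a)) ∧
      ((a ≤ b + c ∧ b ≤ a + c ∧ c ≤ a + b ∧ b + c ≤ 3 * a) ↔
        (a < b + c + 2 ^ (k - 1) ∧ b < a + c + 2 ^ (k - 1) ∧ c < a + b + 2 ^ (k - 1) ∧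
          b + c < 3 * a + 2 ^ (k - 1))) := by
  classical
  haveI : Fact (Nat.Prime 2) := ⟨by norm_num⟩
  have hF2 : Fintype.card (ZMod 2) = 2 := by simp
  obtain ⟨n, m, U, V, φ₀, hφ₀⟩ := hreal
  obtain ⟨p, q, hp, hq, hpq, hcardU, hdiam⟩ := core hF2 hk φ₀ hφ₀
  have h8 : (8 : ℕ) ≤ 2 ^ k := by
    calc (8 : ℕ) = 2 ^ 3 := by norm_num
    _ ≤ 2 ^ k := Nat.pow_le_pow_right (by norm_num) hk
  have hpow : (0 : ℤ) < 2 ^ (k - 1) := by positivity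
  have hpowN : (0 : ℕ) < 2 ^ (k - 1) := by positivity
  obtain ⟨h00, hb, hc, hbc, ⟨h00ne, h00p, h00q⟩, ⟨hbp, hbq⟩, ⟨hcp, hcq⟩, ⟨hbcp, hbcq⟩⟩ :=
    exists_funcs hF2 (by rw [hcardU]; omega) hp hq hpq
  have hbne : hb ≠ 0 := fun e => hbp (by rw [e]; rfl)
  have hcne : hc ≠ 0 := fun e => hcq (by rw [e]; rfl)
  have hbcne : hbc ≠ 0 := fun e => hbcp (by rw [e]; rfl)
  have E00 : (2 : ℤ) ^ (k - 1) * ((dct U h00 : ℤ) - (ect φ₀ h00 : ℤ))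
      = 3 * (a : ℤ) - b - c := by
    have h := hdiam h00 h00ne
    rw [if_neg (by simp [h00p]), if_neg (by simp [h00q])] at h
    linear_combination h
  have Eb : (2 : ℤ) ^ (k - 1) * ((dct U hb : ℤ) - (ect φ₀ hb : ℤ))
      = (a : ℤ) + b - c := by
    have h := hdiam hb hbne
    rw [if_pos hbp, if_neg (by simp [hbq])] at h
    linear_combination h
  have Ec : (2 : ℤ) ^ (k - 1) * ((dct U hc : ℤ) - (ect φ₀ hc : ℤ))
      = (a : ℤ) + c - b := by
    have h := hdiam hc hcne
    rw [if_neg (by simp [hcp]), if_pos hcq] at h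
    linear_combination h
  have Ebc : (2 : ℤ) ^ (k - 1) * ((dct U hbc : ℤ) - (ect φ₀ hbc : ℤ))
      = (b : ℤ) + c - a := by
    have h := hdiam hbc hbcne
    rw [if_pos hbcp, if_pos hbcq] at h
    linear_combination h
  constructor
  · constructor
    · -- forcing implies the inequalities
      intro hforce
      have hproj : IsProjection φ₀ := hforce (ZMod 2) hF2 n m U V φ₀ hφ₀
      have hle := nonneg_of_proj hF2 φ₀ hproj
      have g00 : (0 : ℤ) ≤ 3 * (a : ℤ) - b - c := by
        rw [← E00]
        have := hle h00 h00ne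
        have hx : (0 : ℤ) ≤ (dct U h00 : ℤ) - (ect φ₀ h00 : ℤ) := by
          have := (Int.ofNat_le.2 this)
          omega
        positivity
      have gb : (0 : ℤ) ≤ (a : ℤ) + b - c := by
        rw [← Eb]
        have := Int.ofNat_le.2 (hle hb hbne)
        have hx : (0 : ℤ) ≤ (dct U hb : ℤ) - (ect φ₀ hb : ℤ) := by omega
        positivity
      have gc : (0 : ℤ) ≤ (a : ℤ) + c - b := by
        rw [← Ec]
        have := Int.ofNat_le.2 (hle hc hcne)
        have hx : (0 : ℤ) ≤ (dct U hc : ℤ) - (ect φ₀ hc : ℤ) := by omega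
        positivity
      have gbc : (0 : ℤ) ≤ (b : ℤ) + c - a := by
        rw [← Ebc]
        have := Int.ofNat_le.2 (hle hbc hbcne)
        have hx : (0 : ℤ) ≤ (dct U hbc : ℤ) - (ect φ₀ hbc : ℤ) := by omega
        positivity
      refine ⟨by omega, by omega, by omega, by omega⟩
    · -- the inequalities imply forcing
      intro hineq
      intro F' _ _ _ hF' n' m' U' V' φ' hφ'
      obtain ⟨p', q', hp', hq', hpq', hcardU', hdiam'⟩ := core hF' hk φ' hφ'
      apply proj_of_nonneg hF' φ'
      intro h hh
      have E := hdiam' h hh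
      have hA : (a : ℤ) ≤ (b : ℤ) + c := by exact_mod_cast hineq.1
      have hB : (b : ℤ) ≤ (a : ℤ) + c := by exact_mod_cast hineq.2.1
      have hC : (c : ℤ) ≤ (a : ℤ) + b := by exact_mod_cast hineq.2.2.1
      have hD : (b : ℤ) + c ≤ 3 * a := by exact_mod_cast hineq.2.2.2
      have hrhs : (0 : ℤ) ≤ 3 * (a : ℤ) - b - c
          + 2 * ((b : ℤ) - a) * (if h p' ≠ 0 then 1 else 0)
          + 2 * ((c : ℤ) - a) * (if h q' ≠ 0 then 1 else 0) := by
        by_cases h1 : h p' ≠ 0 <;> by_cases h2 : h q' ≠ 0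
        · rw [if_pos h1, if_pos h2]; linarith
        · rw [if_pos h1, if_neg h2]; linarith
        · rw [if_neg h1, if_pos h2]; linarith
        · rw [if_neg h1, if_neg h2]; linarith
      rw [← E] at hrhs
      have hx : (0 : ℤ) ≤ (dct U' h : ℤ) - (ect φ' h : ℤ) :=
        nonneg_of_mul_nonneg_right hrhs hpow
      omega
  · constructor
    · intro hineq
      exact ⟨by omega, by omega, by omega, by omega⟩
    · intro hineq
      obtain ⟨i1, i2, i3, i4⟩ := hineq
      have hcast : ((2 : ℕ) ^ (k - 1) : ℤ) = (2 : ℤ) ^ (k - 1) := by push_cast; ring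
      have d00 : (0 : ℤ) ≤ 3 * (a : ℤ) - b - c :=
        nonneg_of_dvd_gt hpow ⟨_, E00.symm⟩ (by
          have := i4
          omega)
      have db : (0 : ℤ) ≤ (a : ℤ) + b - c :=
        nonneg_of_dvd_gt hpow ⟨_, Eb.symm⟩ (by
          have := i3
          omega)
      have dc : (0 : ℤ) ≤ (a : ℤ) + c - b :=
        nonneg_of_dvd_gt hpow ⟨_, Ec.symm⟩ (by
          have := i2
          omega)
      have dbc : (0 : ℤ) ≤ (b : ℤ) + c - a :=
        nonneg_of_dvd_gt hpow ⟨_, Ebc.symm⟩ (by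
          have := i1
          omega)
      exact ⟨by omega, by omega, by omega, by omega⟩
end

section
/- The multiset S = {2, 2, 2, 2, 4, 4, 4} is realized by an F_2-linear projection but is not 2-projection-forcing. Specifically: let V_1 ⊆ F_2^7 be the span of {(1,1,1,1,0,0,0), (1,1,0,0,1,1,0), (1,0,1,0,1,0,1)}, let V_2 ⊆ F_2^7 be the span of {(1,1,1,1,0,0,0), (1,1,1,0,1,0,0), (1,1,0,0,0,1,1)}, and let W = {(0,0),(1,1)} ⊆ F_2^2. The map φ_1 : V_1 → W sending v to (v_1, v_1) (two copies of the first coordinate) and the map φ_2 : V_2 → W sending v to (v_1, v_2) both have projective multiset of weight changes equal to {2,2,2,2,4,4,4}; φ_2 is a projection, while φ_1 is not a projection. -/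
open Matrix

/-- The code `V₁ ⊆ F₂⁷` of Example 1. -/
def V₁ : Submodule (ZMod 2) (Fin 7 → ZMod 2) :=
  Submodule.span (ZMod 2) {![1,1,1,1,0,0,0], ![1,1,0,0,1,1,0], ![1,0,1,0,1,0,1]}

/-- The code `V₂ ⊆ F₂⁷` of Example 1. -/
def V₂ : Submodule (ZMod 2) (Fin 7 → ZMod 2) :=
  Submodule.span (ZMod 2) {![1,1,1,1,0,0,0], ![1,1,1,0,1,0,0], ![1,1,0,0,0,1,1]}

/-- The code `W = {(0,0),(1,1)} ⊆ F₂²` of Example 1. -/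
def W : Submodule (ZMod 2) (Fin 2 → ZMod 2) :=
  Submodule.span (ZMod 2) {![1,1]}

lemma zmod2_ne_zero : ∀ (c : ZMod 2) (_ : c ≠ 0), c = 1 := by decide

lemma zmod2_rep_mk {V : Type*} [AddCommGroup V] [Module (ZMod 2) V] (v : V) (hv : v ≠ 0) :
    (Projectivization.mk (ZMod 2) v hv).rep = v := by
  have h := Projectivization.mk_rep (Projectivization.mk (ZMod 2) v hv)
  rw [Projectivization.mk_eq_mk_iff] at h
  obtain ⟨a, ha⟩ := h
  have h1 : (a : ZMod 2) = 1 := zmod2_ne_zero _ a.ne_zero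
  rw [← ha, Units.smul_def, h1, one_smul]

/-- Equiv between nonzero vectors and the projectivization, over F₂. -/
noncomputable def projEquivAux {M : Type*} [AddCommGroup M] [Module (ZMod 2) M] :
    {u : M // u ≠ 0} ≃ Projectivization (ZMod 2) M where
  toFun u := Projectivization.mk (ZMod 2) u.1 u.2
  invFun p := ⟨p.rep, p.rep_nonzero⟩
  left_inv u := Subtype.ext (zmod2_rep_mk u.1 u.2)
  right_inv p := p.mk_rep

lemma projWC_eq {n m k : ℕ} {U : Submodule (ZMod 2) (Fin n → ZMod 2)}
    {V : Submodule (ZMod 2) (Fin m → ZMod 2)} (φ : U →ₗ[ZMod 2] V)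
    (T : (Fin k → ZMod 2) →ₗ[ZMod 2] (Fin n → ZMod 2)) (hT : Function.Injective T)
    (hR : ∀ x, T x ∈ U) (hR' : ∀ u : U, ∃ x, T x = (u : Fin n → ZMod 2)) :
    projWeightChanges φ =
      (Finset.univ : Finset {x : Fin k → ZMod 2 // x ≠ 0}).val.map
        (fun x => (hammingNorm (T x.1) : ℤ) -
          (hammingNorm ((φ ⟨T x.1, hR x.1⟩ : V) : Fin m → ZMod 2) : ℤ)) := by
  have hbij : Function.Bijective (fun x : Fin k → ZMod 2 => (⟨T x, hR x⟩ : U)) := by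
    constructor
    · intro x y hxy
      exact hT (by simpa [Subtype.ext_iff] using hxy)
    · intro u
      obtain ⟨x, hx⟩ := hR' u
      exact ⟨x, Subtype.ext hx⟩
  have h0 : ∀ x : Fin k → ZMod 2, x ≠ 0 ↔ (⟨T x, hR x⟩ : U) ≠ 0 := by
    intro x
    constructor
    · intro hx h
      exact hx (hT (by simpa [Subtype.ext_iff, map_zero] using h))
    · intro h hx
      exact h (by simp [hx, Subtype.ext_iff, map_zero])
  let e : {x : Fin k → ZMod 2 // x ≠ 0} ≃ Projectivization (ZMod 2) U :=
    ((Equiv.ofBijective _ hbij).subtypeEquiv h0).trans projEquivAux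
  unfold projWeightChanges
  rw [← Multiset.map_univ_val_equiv e, Multiset.map_map]
  refine Multiset.map_congr rfl ?_
  intro x _
  have hrep : (e x).rep = (⟨T x.1, hR x.1⟩ : U) := zmod2_rep_mk _ _
  simp only [Function.comp_apply, hrep]
def A1 : Matrix (Fin 3) (Fin 7) (ZMod 2) :=
  ![![1,1,1,1,0,0,0], ![1,1,0,0,1,1,0], ![1,0,1,0,1,0,1]]

def A2 : Matrix (Fin 3) (Fin 7) (ZMod 2) :=
  ![![1,1,1,1,0,0,0], ![1,1,1,0,1,0,0], ![1,1,0,0,0,1,1]]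

lemma range_matrix3 (a b c : Fin 7 → ZMod 2) : Set.range ![a,b,c] = {a,b,c} := by
  ext v
  simp [Fin.exists_fin_two, Fin.exists_fin_succ]
  tauto

lemma rangeA1 : LinearMap.range A1.vecMulLinear = V₁ := by
  rw [range_vecMulLinear, V₁, A1]
  exact congrArg _ (range_matrix3 _ _ _)

lemma rangeA2 : LinearMap.range A2.vecMulLinear = V₂ := by
  rw [range_vecMulLinear, V₂, A2]
  exact congrArg _ (range_matrix3 _ _ _)

lemma memV1 : ∀ x, A1.vecMulLinear x ∈ V₁ := fun x => rangeA1 ▸ LinearMap.mem_range_self _ x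

lemma memV2 : ∀ x, A2.vecMulLinear x ∈ V₂ := fun x => rangeA2 ▸ LinearMap.mem_range_self _ x

lemma surjV1 : ∀ u : V₁, ∃ x, A1.vecMulLinear x = (u : Fin 7 → ZMod 2) := fun u =>
  (le_of_eq rangeA1.symm) u.2

lemma surjV2 : ∀ u : V₂, ∃ x, A2.vecMulLinear x = (u : Fin 7 → ZMod 2) := fun u =>
  (le_of_eq rangeA2.symm) u.2

lemma injA1 : Function.Injective A1.vecMulLinear := by
  rw [← LinearMap.ker_eq_bot, LinearMap.ker_eq_bot']
  have h : ∀ x : Fin 3 → ZMod 2, x ᵥ* A1 = 0 → x = 0 := by decide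
  intro x hx
  exact h x (by simpa using hx)

lemma injA2 : Function.Injective A2.vecMulLinear := by
  rw [← LinearMap.ker_eq_bot, LinearMap.ker_eq_bot']
  have h : ∀ x : Fin 3 → ZMod 2, x ᵥ* A2 = 0 → x = 0 := by decide
  intro x hx
  exact h x (by simpa using hx)
lemma memW (c : ZMod 2) : ![c, c] ∈ W := by
  have h : ![c, c] = c • ![1, 1] := by
    funext i; fin_cases i <;> simp
  rw [h, W]
  exact Submodule.smul_mem _ _ (Submodule.subset_span rfl)

lemma memW' (c d : ZMod 2) (h : c = d) : ![c, d] ∈ W := by subst h; exact memW c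

lemma V2_01 : ∀ v : V₂, (v : Fin 7 → ZMod 2) 0 = (v : Fin 7 → ZMod 2) 1 := by
  intro v
  obtain ⟨x, hx⟩ := surjV2 v
  have h : ∀ x : Fin 3 → ZMod 2, A2.vecMulLinear x 0 = A2.vecMulLinear x 1 := by decide
  rw [← hx]
  exact h x

def phi1 : V₁ →ₗ[ZMod 2] W where
  toFun v := ⟨![(v : Fin 7 → ZMod 2) 0, (v : Fin 7 → ZMod 2) 0], memW _⟩
  map_add' x y := by apply Subtype.ext; funext i; fin_cases i <;> simp
  map_smul' c x := by apply Subtype.ext; funext i; fin_cases i <;> simp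

def phi2 : V₂ →ₗ[ZMod 2] W where
  toFun v := ⟨![(v : Fin 7 → ZMod 2) 0, (v : Fin 7 → ZMod 2) 1], memW' _ _ (V2_01 v)⟩
  map_add' x y := by apply Subtype.ext; funext i; fin_cases i <;> simp
  map_smul' c x := by apply Subtype.ext; funext i; fin_cases i <;> simp
lemma pw1 : projWeightChanges phi1 = ({2,2,2,2,4,4,4} : Multiset ℤ) := by
  rw [projWC_eq phi1 A1.vecMulLinear injA1 memV1 surjV1]
  decide

lemma pw2 : projWeightChanges phi2 = ({2,2,2,2,4,4,4} : Multiset ℤ) := by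
  rw [projWC_eq phi2 A2.vecMulLinear injA2 memV2 surjV2]
  decide
set_option maxRecDepth 100000 in
lemma proj2 : IsProjection phi2 := by
  have hMv : ∀ v : Fin 7 → ZMod 2,
      (Matrix.of ![![1,0,0,0,0,0,0], ![0,1,0,0,0,0,0]]).mulVec v = ![v 0, v 1] := by decide
  refine ⟨Matrix.of ![![1,0,0,0,0,0,0], ![0,1,0,0,0,0,0]], ?_, ?_, ?_⟩
  · intro u
    rw [hMv]
    rfl
  · show ∀ (i : Fin 2) (j j' : Fin 7), (![![1,0,0,0,0,0,0], ![0,1,0,0,0,0,0]] : Fin 2 → Fin 7 → ZMod 2) i j ≠ 0 →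
      (![![1,0,0,0,0,0,0], ![0,1,0,0,0,0,0]] : Fin 2 → Fin 7 → ZMod 2) i j' ≠ 0 → j = j'
    decide
  · show ∀ (i i' : Fin 2) (j : Fin 7), (![![1,0,0,0,0,0,0], ![0,1,0,0,0,0,0]] : Fin 2 → Fin 7 → ZMod 2) i j ≠ 0 →
      (![![1,0,0,0,0,0,0], ![0,1,0,0,0,0,0]] : Fin 2 → Fin 7 → ZMod 2) i' j ≠ 0 → i = i'
    decide

set_option maxRecDepth 100000 in
lemma rowlem : ∀ r : Fin 7 → ZMod 2,
    dotProduct r ![1,1,1,1,0,0,0] = 1 →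
    dotProduct r ![1,1,0,0,1,1,0] = 1 →
    dotProduct r ![1,0,1,0,1,0,1] = 1 →
    (∀ j j', r j ≠ 0 → r j' ≠ 0 → j = j') → r 0 ≠ 0 := by decide

lemma notproj1 : ¬ IsProjection phi1 := by
  rintro ⟨M, hM, hrow, hcol⟩
  have heq : ∀ x : Fin 3 → ZMod 2, M.mulVec (x ᵥ* A1) = ![(x ᵥ* A1) 0, (x ᵥ* A1) 0] :=
    fun x => (hM ⟨A1.vecMulLinear x, memV1 x⟩).symm
  have e1 : (![1,0,0] ᵥ* A1 : Fin 7 → ZMod 2) = ![1,1,1,1,0,0,0] := by decide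
  have e2 : (![0,1,0] ᵥ* A1 : Fin 7 → ZMod 2) = ![1,1,0,0,1,1,0] := by decide
  have e3 : (![0,0,1] ᵥ* A1 : Fin 7 → ZMod 2) = ![1,0,1,0,1,0,1] := by decide
  have hi : ∀ i : Fin 2, M i 0 ≠ 0 := by
    intro i
    have h1 := congrFun (heq ![1,0,0]) i
    have h2 := congrFun (heq ![0,1,0]) i
    have h3 := congrFun (heq ![0,0,1]) i
    rw [e1] at h1
    rw [e2] at h2
    rw [e3] at h3
    refine rowlem (M i) ?_ ?_ ?_ (fun j j' => hrow i j j')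
    · fin_cases i <;> simpa [Matrix.mulVec] using h1
    · fin_cases i <;> simpa [Matrix.mulVec] using h2
    · fin_cases i <;> simpa [Matrix.mulVec] using h3
  exact absurd (hcol 0 1 0 (hi 0) (hi 1)) (by decide)

/-- `S = {2,2,2,2,4,4,4}` is realized both by the non-projection
`φ₁ : V₁ → W, v ↦ (v₁, v₁)` and by the projection `φ₂ : V₂ → W, v ↦ (v₁, v₂)`;
hence `S` is realized by a projection but is not 2-projection-forcing. -/
theorem stmt_15 :
    ∃ (φ₁ : V₁ →ₗ[ZMod 2] W) (φ₂ : V₂ →ₗ[ZMod 2] W),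
      (∀ v : V₁, ((φ₁ v : W) : Fin 2 → ZMod 2) =
        ![(v : Fin 7 → ZMod 2) 0, (v : Fin 7 → ZMod 2) 0]) ∧
      (∀ v : V₂, ((φ₂ v : W) : Fin 2 → ZMod 2) =
        ![(v : Fin 7 → ZMod 2) 0, (v : Fin 7 → ZMod 2) 1]) ∧
      projWeightChanges φ₁ = ({2,2,2,2,4,4,4} : Multiset ℤ) ∧
      projWeightChanges φ₂ = ({2,2,2,2,4,4,4} : Multiset ℤ) ∧
      IsProjection φ₂ ∧
      ¬ IsProjection φ₁ ∧
      ¬ ProjectionForcing 2 ({2,2,2,2,4,4,4} : Multiset ℤ) := by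
  refine ⟨phi1, phi2, fun v => rfl, fun v => rfl, pw1, pw2, proj2, notproj1, ?_⟩
  intro h
  exact notproj1 (h (ZMod 2) (ZMod.card 2) 7 2 V₁ W phi1 pw1)
end
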